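/- In a finite concurrent reachability game ⟨C,⊤⟩, the set Bad equals the set SubMaxQ_A of sub-maximizable states and Sec(Bad) equals the set MaxQ_A of maximizable states. Furthermore, for every ε > 0 there exists a positional Player A strategy s_A that is optimal from every state in MaxQ_A and ε-optimal from every state in SubMaxQ_A. -/

import Mathlib

open scoped BigOperators Classical

noncomputable section

/-- A probability distribution on a finite type. -/
def FDist (X : Type) [Fintype X] : Type :=
  { p : X → ℝ // (∀ x, 0 ≤ p x) ∧ ∑ x, p x = 1 }

namespace CRG

variable {A B Q D : Type} [Fintype A] [Fintype B] [Fintype Q] [Fintype D]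

/-- The support of a distribution. -/
def supp {X : Type} [Fintype X] (σ : FDist X) : Set X := { x | σ.1 x ≠ 0 }

/-- The Dirac distribution. -/
def dirac {X : Type} [Fintype X] [DecidableEq X] (x : X) : FDist X :=
  ⟨fun y => if y = x then 1 else 0, by
    constructor
    · intro y
      dsimp only
      split <;> norm_num
    · simp⟩

/-- Outcome of a pair of mixed strategies in the game in normal form with payoff `u`. -/
def out (u : A → B → ℝ) (σA : FDist A) (σB : FDist B) : ℝ :=
  ∑ a, ∑ b, σA.1 a * σB.1 b * u a b

/-- Outcome of a mixed strategy of Player A against a pure action of Player B. -/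
def outB (u : A → B → ℝ) (σA : FDist A) (b : B) : ℝ :=
  ∑ a, σA.1 a * u a b

/-- The value of a Player A mixed strategy in a game in normal form. -/
def valStratGF (u : A → B → ℝ) (σA : FDist A) : ℝ :=
  ⨅ σB : FDist B, out u σA σB

/-- The (von Neumann) value of a finite game in normal form. -/
def valGF (u : A → B → ℝ) : ℝ :=
  ⨆ σA : FDist A, valStratGF u σA

/-- The optimal Player A mixed strategies in a game in normal form. -/
def OptA (u : A → B → ℝ) : Set (FDist A) := { σA | valStratGF u σA = valGF u }

/-- The optimal actions of Player B against the Player A mixed strategy `σA`. -/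
def optActs (u : A → B → ℝ) (σA : FDist A) : Set B :=
  { b | outB u σA b = valStratGF u σA }

/-- μ_v : the lift of a valuation of the states to the Nature states. -/
def lift (dist : D → FDist Q) (v : Q → ℝ) (d : D) : ℝ := ∑ q, (dist d).1 q * v q

/-- The payoff function of the local interaction `F_q` valued by `μ_m`. -/
def locPay (δ : Q → A → B → D) (dist : D → FDist Q) (m : Q → ℝ) (q : Q) : A → B → ℝ :=
  fun a b => lift dist m (δ q a b)

/-- One-step transition probability between states. -/
def step (δ : Q → A → B → D) (dist : D → FDist Q) (σA : FDist A) (σB : FDist B)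
    (q q' : Q) : ℝ :=
  ∑ a, ∑ b, σA.1 a * σB.1 b * (dist (δ q a b)).1 q'

/-- The operator Δ on valuations of the states. -/
def Δop (δ : Q → A → B → D) (dist : D → FDist Q) (T : Q) (v : Q → ℝ) : Q → ℝ :=
  fun q => if q = T then 1 else valGF (fun a b => lift dist v (δ q a b))

/-- The target `T` is an absorbing (self-looping) sink. -/
def Absorbing (δ : Q → A → B → D) (dist : D → FDist Q) (T : Q) : Prop :=
  ∀ a b, (dist (δ T a b)).1 = fun q => if q = T then 1 else 0

/-- `m` is the least fixed point of Δ on `[0,1]^Q`. -/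
def IsLfpDelta (δ : Q → A → B → D) (dist : D → FDist Q) (T : Q) (m : Q → ℝ) : Prop :=
  (∀ q, m q ∈ Set.Icc (0:ℝ) 1) ∧ Δop δ dist T m = m ∧
    ∀ v : Q → ℝ, (∀ q, v q ∈ Set.Icc (0:ℝ) 1) → Δop δ dist T v = v → ∀ q, m q ≤ v q

/-- A strategy: a history of past states together with the current state gives a
mixed action.  (This encodes maps `Q⁺ → 𝒟(X)`.) -/
def Strat (Q X : Type) [Fintype X] : Type := List Q → Q → FDist X

/-- Residual strategy after the history `π` has been played. -/
def residual {X : Type} [Fintype X] (s : Strat Q X) (π : List Q) : Strat Q X :=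
  fun h q => s (π ++ h) q

/-- The (positional) strategy associated with a per-state choice of mixed actions. -/
def ofPos {X : Type} [Fintype X] (s : Q → FDist X) : Strat Q X := fun _ q => s q

/-- Probability of reaching the set `S` within `n` steps from current state `q`,
history `h` having been played. -/
def reachSetNAux (δ : Q → A → B → D) (dist : D → FDist Q) (S : Set Q) :
    ℕ → Strat Q A → Strat Q B → List Q → Q → ℝ
  | 0, _, _, _, q => if q ∈ S then 1 else 0
  | n + 1, sA, sB, h, q =>
      if q ∈ S then 1
      else ∑ q', step δ dist (sA h q) (sB h q) q q' *
        reachSetNAux δ dist S n sA sB (h ++ [q]) q'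

/-- Probability of reaching the set `S` within `n` steps from state `q`. -/
def reachSetN (δ : Q → A → B → D) (dist : D → FDist Q) (S : Set Q) (n : ℕ)
    (sA : Strat Q A) (sB : Strat Q B) (q : Q) : ℝ :=
  reachSetNAux δ dist S n sA sB [] q

/-- Probability of reaching the target `T` within `n` steps from state `q`. -/
def reachN (δ : Q → A → B → D) (dist : D → FDist Q) (T : Q) (n : ℕ)
    (sA : Strat Q A) (sB : Strat Q B) (q : Q) : ℝ :=
  reachSetN δ dist {T} n sA sB q

/-- Probability of eventually reaching the target `T` from state `q`. -/
def reach (δ : Q → A → B → D) (dist : D → FDist Q) (T : Q)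
    (sA : Strat Q A) (sB : Strat Q B) (q : Q) : ℝ :=
  ⨆ n : ℕ, reachN δ dist T n sA sB q

/-- The value of a Player A strategy from state `q`. -/
def valA (δ : Q → A → B → D) (dist : D → FDist Q) (T : Q) (sA : Strat Q A) (q : Q) : ℝ :=
  ⨅ sB : Strat Q B, reach δ dist T sA sB q

/-- The value of the game from state `q`. -/
def value (δ : Q → A → B → D) (dist : D → FDist Q) (T : Q) (q : Q) : ℝ :=
  ⨆ sA : Strat Q A, valA δ dist T sA q

/-- A state is maximizable when Player A has an optimal strategy from it. -/
def Maximizable (δ : Q → A → B → D) (dist : D → FDist Q) (T q : Q) : Prop :=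
  ∃ sA : Strat Q A, valA δ dist T sA q = value δ dist T q

/-- A positional Player A strategy locally dominates the valuation `v`. -/
def LocallyDominates (δ : Q → A → B → D) (dist : D → FDist Q)
    (sA : Q → FDist A) (v : Q → ℝ) : Prop :=
  ∀ q, v q ≤ valStratGF (fun a b => lift dist v (δ q a b)) (sA q)

/-- Transition function ι of the MDP induced by a positional Player A strategy. -/
def stepB [DecidableEq B] (δ : Q → A → B → D) (dist : D → FDist Q)
    (sA : Q → FDist A) (q : Q) (b : B) (q' : Q) : ℝ :=
  step δ dist (sA q) (dirac b) q q'

/-- An end component of the MDP induced by the positional Player A strategy `sA`. -/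
structure EndComp [DecidableEq B] (δ : Q → A → B → D) (dist : D → FDist Q)
    (sA : Q → FDist A) where
  states : Set Q
  acts : Q → Set B
  acts_nonempty : ∀ q ∈ states, (acts q).Nonempty
  closed : ∀ q ∈ states, ∀ b ∈ acts q, ∀ q', stepB δ dist sA q b q' ≠ 0 → q' ∈ states
  connected : ∀ q ∈ states, ∀ q' ∈ states,
    Relation.ReflTransGen
      (fun x y => x ∈ states ∧ ∃ b ∈ acts x, stepB δ dist sA x b y ≠ 0) q q'

/-- `S_D` : the Nature states having a non-zero probability to reach `S`. -/
def natS (dist : D → FDist Q) (S : Set Q) : Set D :=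
  { d | ∃ q ∈ S, (dist d).1 q ≠ 0 }

/-- Progressive optimal local strategies at `q` w.r.t. the set `Gd`. -/
def Prog (δ : Q → A → B → D) (dist : D → FDist Q) (m : Q → ℝ) (q : Q)
    (Gd : Set Q) : Set (FDist A) :=
  { σA | σA ∈ OptA (locPay δ dist m q) ∧
      ∀ b ∈ optActs (locPay δ dist m q) σA, ∃ a ∈ supp σA, δ q a b ∈ natS dist Gd }

/-- Risky optimal local strategies at `q` w.r.t. the set `Bd`. -/
def Risk (δ : Q → A → B → D) (dist : D → FDist Q) (m : Q → ℝ) (q : Q)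
    (Bd : Set Q) : Set (FDist A) :=
  { σA | σA ∈ OptA (locPay δ dist m q) ∧
      ∃ b ∈ optActs (locPay δ dist m q) σA, ∃ a ∈ supp σA, δ q a b ∈ natS dist Bd }

/-- Efficient local strategies: progressive and not risky. -/
def Eff (δ : Q → A → B → D) (dist : D → FDist Q) (m : Q → ℝ) (q : Q)
    (Gd Bd : Set Q) : Set (FDist A) :=
  Prog δ dist m q Gd \ Risk δ dist m q Bd

/-- The increasing sequence of sets of secure states w.r.t. `Bd`. -/
def SecN (δ : Q → A → B → D) (dist : D → FDist Q) (m : Q → ℝ) (T : Q) (Bd : Set Q) :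
    ℕ → Set Q
  | 0 => {T}
  | n + 1 => SecN δ dist m T Bd n ∪
      { q | q ∉ Bd ∧ (Eff δ dist m q (SecN δ dist m T Bd n) Bd).Nonempty }

/-- The set of secure states w.r.t. `Bd`. -/
def Sec (δ : Q → A → B → D) (dist : D → FDist Q) (m : Q → ℝ) (T : Q) (Bd : Set Q) :
    Set Q :=
  (⋃ n : ℕ, SecN δ dist m T Bd n) ∪ { q | m q = 0 }

/-- The sequence of sets of bad states. -/
def BadN (δ : Q → A → B → D) (dist : D → FDist Q) (m : Q → ℝ) (T : Q) : ℕ → Set Q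
  | 0 => ∅
  | n + 1 => (Sec δ dist m T (BadN δ dist m T n))ᶜ

/-- The set of bad states. -/
def Bad (δ : Q → A → B → D) (dist : D → FDist Q) (m : Q → ℝ) (T : Q) : Set Q :=
  BadN δ dist m T (Fintype.card Q)

/-- `α[y]` : the total valuation extending the partial valuation `α : O∖E → [0,1]`
with the value `y` on `E`. -/
def extendVal {O : Type} (E : Set O) (α : O → ℝ) (y : ℝ) : O → ℝ :=
  fun o => if o ∈ E then y else α o

/-- The map `f_α : y ↦ val_{⟨F, α[y]⟩}`. -/
def fval {O : Type} (ρ : A → B → O) (E : Set O) (α : O → ℝ) (y : ℝ) : ℝ :=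
  valGF (fun a b => extendVal E α y (ρ a b))

/-- `v` is the least fixed point of `f_α` on `[0,1]`. -/
def IsLfpVal {O : Type} (ρ : A → B → O) (E : Set O) (α : O → ℝ) (v : ℝ) : Prop :=
  v ∈ Set.Icc (0:ℝ) 1 ∧ fval ρ E α v = v ∧
    ∀ y ∈ Set.Icc (0:ℝ) 1, fval ρ E α y = y → v ≤ y

/-- The game form `ρ` is reach-maximizable w.r.t. the partial valuation `α : O∖E → [0,1]`. -/
def RMwrt {O : Type} (ρ : A → B → O) (E : Set O) (α : O → ℝ) : Prop :=
  ∀ v : ℝ, IsLfpVal ρ E α v →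
    v = 0 ∨
      ∃ σA ∈ OptA (fun a b => extendVal E α v (ρ a b)),
        ∀ b ∈ optActs (fun a b => extendVal E α v (ρ a b)) σA,
          ∃ a ∈ supp σA, ρ a b ∉ E

/-- A reach-maximizable game form: RM w.r.t. every partial valuation of its outcomes. -/
def RMform {O : Type} (ρ : A → B → O) : Prop :=
  ∀ (E : Set O) (α : O → ℝ), (∀ o ∉ E, α o ∈ Set.Icc (0:ℝ) 1) → RMwrt ρ E α

/-- A determined game form. -/
def Determined {O : Type} (ρ : A → B → O) : Prop :=
  ∀ E : Set O, (∃ a, ∀ b, ρ a b ∈ E) ∨ (∃ b, ∀ a, ρ a b ∉ E)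

/-- Transition function of the three-state reachability game `C_{(F,α)}`:
state `0` is `q₀`, state `1` is the target `⊤`, state `2` is the bin `⊥`. -/
def triδ {O : Type} (ρ : A → B → O) (E : Set O) :
    Fin 3 → A → B → (Fin 3 ⊕ {o : O // o ∉ E}) :=
  fun s a b =>
    if s = 0 then
      if h : ρ a b ∈ E then Sum.inl 0 else Sum.inr ⟨ρ a b, h⟩
    else Sum.inl s

/-- Nature distributions of the three-state reachability game `C_{(F,α)}`. -/
def triDist {O : Type} (E : Set O) (α : O → ℝ)
    (hα : ∀ o ∉ E, α o ∈ Set.Icc (0:ℝ) 1) :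
    (Fin 3 ⊕ {o : O // o ∉ E}) → FDist (Fin 3) := fun d =>
  match d with
  | Sum.inl t => dirac t
  | Sum.inr x =>
      ⟨![0, α x.1, 1 - α x.1], by
        obtain ⟨h0, h1⟩ := hα x.1 x.2
        constructor
        · intro s
          fin_cases s <;> simp <;> linarith
        · simp [Fin.sum_univ_three]⟩

/-- An abstract (finite) game form with actions `A` and `B`. -/
structure GameForm (A B : Type) where
  O : Type
  fin : Fintype O
  ρ : A → B → O

/-- All local interactions of the arena `δ` belong to the set `𝒢` of game forms
(up to a renaming of the outcomes into Nature states). -/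
def UsesForms {Q D : Type} (𝒢 : Set (GameForm A B)) (δ : Q → A → B → D) : Prop :=
  ∀ q, ∃ F ∈ 𝒢, ∃ g : F.O → D, δ q = fun a b => g (F.ρ a b)

/-- The sequence of iterates of Δ starting from the valuation `1_{⊤}`. -/
def vseq (δ : Q → A → B → D) (dist : D → FDist Q) (T : Q) : ℕ → Q → ℝ
  | 0 => fun q => if q = T then 1 else 0
  | n + 1 => Δop δ dist T (vseq δ dist T n)

/-- Relevant paths w.r.t. the strategy `sA` from the state `q₀`: the pair `(h, q)`
encodes the path `h · q` (history `h`, current state `q`). -/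
inductive Relevant [DecidableEq B] (δ : Q → A → B → D) (dist : D → FDist Q)
    (m : Q → ℝ) (sA : Strat Q A) (q₀ : Q) : List Q → Q → Prop
  | base : Relevant δ dist m sA q₀ [] q₀
  | step {h : List Q} {q q' : Q} :
      Relevant δ dist m sA q₀ h q →
      (∃ b ∈ optActs (locPay δ dist m q) (sA h q),
        0 < CRG.step δ dist (sA h q) (dirac b) q q') →
      Relevant δ dist m sA q₀ (h ++ [q]) q'

end CRG
set_option linter.unusedSectionVars false
set_option linter.unusedVariables false
set_option maxHeartbeats 1000000
namespace CRG
section Dev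
variable {A B Q D : Type} [Fintype A] [Fintype B] [Fintype Q] [Fintype D]

/-! ### FDist basics -/

instance {X : Type} [Fintype X] [Nonempty X] : Nonempty (FDist X) :=
  ⟨dirac (Classical.arbitrary X)⟩

lemma fd_nonneg {X : Type} [Fintype X] (p : FDist X) (x : X) : 0 ≤ p.1 x := p.2.1 x

lemma fd_sum {X : Type} [Fintype X] (p : FDist X) : ∑ x, p.1 x = 1 := p.2.2

lemma fd_le_one {X : Type} [Fintype X] (p : FDist X) (x : X) : p.1 x ≤ 1 := by
  have := Finset.single_le_sum (f := p.1) (fun i _ => p.2.1 i) (Finset.mem_univ x)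
  rw [fd_sum] at this; exact this

lemma dirac_apply {X : Type} [Fintype X] [DecidableEq X] (x y : X) :
    (dirac x).1 y = if y = x then 1 else 0 := rfl

lemma sum_dirac_mul {X : Type} [Fintype X] [DecidableEq X] (x : X) (f : X → ℝ) :
    ∑ y, (dirac x).1 y * f y = f x := by
  simp [dirac_apply, Finset.sum_ite_eq', ite_mul]

/-! ### out / outB -/

lemma out_eq_sum_outB (u : A → B → ℝ) (σA : FDist A) (σB : FDist B) :
    out u σA σB = ∑ b, σB.1 b * outB u σA b := by
  unfold out outB
  rw [Finset.sum_comm]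
  refine Finset.sum_congr rfl fun b _ => ?_
  rw [Finset.mul_sum]
  exact Finset.sum_congr rfl fun a _ => by ring

lemma out_dirac [DecidableEq B] (u : A → B → ℝ) (σA : FDist A) (b : B) :
    out u σA (dirac b) = outB u σA b := by
  rw [out_eq_sum_outB, sum_dirac_mul]

lemma outB_nonneg (u : A → B → ℝ) (h0 : ∀ a b, 0 ≤ u a b) (σA : FDist A) (b : B) :
    0 ≤ outB u σA b :=
  Finset.sum_nonneg fun a _ => mul_nonneg (fd_nonneg _ _) (h0 a b)

lemma outB_le_one (u : A → B → ℝ) (h1 : ∀ a b, u a b ≤ 1) (σA : FDist A) (b : B) :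
    outB u σA b ≤ 1 := by
  calc outB u σA b ≤ ∑ a, σA.1 a * 1 :=
        Finset.sum_le_sum fun a _ => mul_le_mul_of_nonneg_left (h1 a b) (fd_nonneg _ _)
    _ = 1 := by rw [← Finset.sum_mul]; rw [fd_sum]; ring

lemma outB_mono {u u' : A → B → ℝ} (h : ∀ a b, u a b ≤ u' a b) (σA : FDist A) (b : B) :
    outB u σA b ≤ outB u' σA b :=
  Finset.sum_le_sum fun a _ => mul_le_mul_of_nonneg_left (h a b) (fd_nonneg _ _)

lemma outB_sub_le {u u' : A → B → ℝ} {c : ℝ} (h : ∀ a b, u a b ≤ u' a b + c)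
    (σA : FDist A) (b : B) : outB u σA b ≤ outB u' σA b + c := by
  have : outB u σA b ≤ ∑ a, (σA.1 a * u' a b + σA.1 a * c) := by
    apply Finset.sum_le_sum
    intro a _
    have := mul_le_mul_of_nonneg_left (h a b) (fd_nonneg σA a)
    linarith [this]
  rw [Finset.sum_add_distrib, ← Finset.sum_mul, fd_sum, one_mul] at this
  exact this

section BNE
variable [Nonempty B]

/-- `valStratGF` equals the min over pure actions of Player B. -/
lemma valStratGF_eq_inf' [DecidableEq B] (u : A → B → ℝ) (σA : FDist A) :
    valStratGF u σA = Finset.univ.inf' Finset.univ_nonempty (outB u σA) := by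
  have hlb : ∀ σB : FDist B, Finset.univ.inf' Finset.univ_nonempty (outB u σA) ≤ out u σA σB := by
    intro σB
    rw [out_eq_sum_outB]
    calc Finset.univ.inf' Finset.univ_nonempty (outB u σA)
        = ∑ b, σB.1 b * Finset.univ.inf' Finset.univ_nonempty (outB u σA) := by
          rw [← Finset.sum_mul, fd_sum, one_mul]
      _ ≤ ∑ b, σB.1 b * outB u σA b := by
          apply Finset.sum_le_sum
          intro b _
          exact mul_le_mul_of_nonneg_left (Finset.inf'_le _ (Finset.mem_univ b)) (fd_nonneg _ _)
  apply le_antisymm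
  · obtain ⟨b, _, hb⟩ := Finset.exists_mem_eq_inf' (Finset.univ_nonempty) (outB u σA)
    rw [hb]
    have hbdd : BddBelow (Set.range fun σB => out u σA σB) := by
      refine ⟨Finset.univ.inf' Finset.univ_nonempty (outB u σA), ?_⟩
      rintro x ⟨σB, rfl⟩
      exact hlb σB
    have h2 : valStratGF u σA ≤ out u σA (dirac b) := ciInf_le hbdd (dirac b)
    rw [out_dirac] at h2
    exact h2
  · exact le_ciInf hlb

lemma valStratGF_le_outB [DecidableEq B] (u : A → B → ℝ) (σA : FDist A) (b : B) :
    valStratGF u σA ≤ outB u σA b := by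
  rw [valStratGF_eq_inf']
  exact Finset.inf'_le _ (Finset.mem_univ b)

lemma exists_optAct [DecidableEq B] (u : A → B → ℝ) (σA : FDist A) :
    ∃ b, b ∈ optActs u σA := by
  obtain ⟨b, _, hb⟩ := Finset.exists_mem_eq_inf' (Finset.univ_nonempty) (outB u σA)
  exact ⟨b, by simp [optActs, valStratGF_eq_inf', hb.symm]⟩

lemma outB_optAct [DecidableEq B] {u : A → B → ℝ} {σA : FDist A} {b : B}
    (h : b ∈ optActs u σA) : outB u σA b = valStratGF u σA := h

lemma valStratGF_nonneg [DecidableEq B] (u : A → B → ℝ) (h0 : ∀ a b, 0 ≤ u a b)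
    (σA : FDist A) : 0 ≤ valStratGF u σA := by
  rw [valStratGF_eq_inf']
  obtain ⟨b, _, hb⟩ := Finset.exists_mem_eq_inf' (Finset.univ_nonempty) (outB u σA)
  rw [hb]; exact outB_nonneg u h0 σA b

lemma valStratGF_le_one [DecidableEq B] (u : A → B → ℝ) (h1 : ∀ a b, u a b ≤ 1)
    (σA : FDist A) : valStratGF u σA ≤ 1 :=
  (valStratGF_le_outB u σA (Classical.arbitrary B)).trans (outB_le_one u h1 σA _)

lemma valStratGF_mono [DecidableEq B] {u u' : A → B → ℝ} (h : ∀ a b, u a b ≤ u' a b)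
    (σA : FDist A) : valStratGF u σA ≤ valStratGF u' σA := by
  obtain ⟨b, hb⟩ := exists_optAct u' σA
  calc valStratGF u σA ≤ outB u σA b := valStratGF_le_outB u σA b
    _ ≤ outB u' σA b := outB_mono h σA b
    _ = valStratGF u' σA := hb

lemma valStratGF_sub_le [DecidableEq B] {u u' : A → B → ℝ} {c : ℝ}
    (h : ∀ a b, u a b ≤ u' a b + c) (σA : FDist A) :
    valStratGF u σA ≤ valStratGF u' σA + c := by
  obtain ⟨b, hb⟩ := exists_optAct u' σA
  calc valStratGF u σA ≤ outB u σA b := valStratGF_le_outB u σA b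
    _ ≤ outB u' σA b + c := outB_sub_le h σA b
    _ = valStratGF u' σA + c := by rw [hb]

end BNE

section ValGF
variable [Nonempty A] [Nonempty B] [DecidableEq B]

lemma bddAbove_valStratGF (u : A → B → ℝ) (h1 : ∀ a b, u a b ≤ 1) :
    BddAbove (Set.range fun σA => valStratGF u σA) :=
  ⟨1, fun x ⟨σA, hσA⟩ => hσA ▸ valStratGF_le_one u h1 σA⟩

lemma valStratGF_le_valGF (u : A → B → ℝ) (h1 : ∀ a b, u a b ≤ 1) (σA : FDist A) :
    valStratGF u σA ≤ valGF u :=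
  le_ciSup (bddAbove_valStratGF u h1) σA

lemma valGF_nonneg (u : A → B → ℝ) (h0 : ∀ a b, 0 ≤ u a b) (h1 : ∀ a b, u a b ≤ 1) :
    0 ≤ valGF u :=
  (valStratGF_nonneg u h0 (Classical.arbitrary _)).trans
    (valStratGF_le_valGF u h1 (Classical.arbitrary _))

lemma valGF_le_one (u : A → B → ℝ) (h1 : ∀ a b, u a b ≤ 1) : valGF u ≤ 1 :=
  ciSup_le fun σA => valStratGF_le_one u h1 σA

lemma exists_valStratGF_gt (u : A → B → ℝ) {e : ℝ} (he : 0 < e) :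
    ∃ σA, valGF u - e < valStratGF u σA :=
  exists_lt_of_lt_ciSup (by linarith : valGF u - e < valGF u)

lemma valGF_sub_le {u u' : A → B → ℝ} {c : ℝ} (hc : 0 ≤ c)
    (h1' : ∀ a b, u' a b ≤ 1) (h : ∀ a b, u a b ≤ u' a b + c) :
    valGF u ≤ valGF u' + c := by
  apply ciSup_le
  intro σA
  calc valStratGF u σA ≤ valStratGF u' σA + c := valStratGF_sub_le h σA
    _ ≤ valGF u' + c := by linarith [valStratGF_le_valGF u' h1' σA]

lemma valGF_mono {u u' : A → B → ℝ} (h1' : ∀ a b, u' a b ≤ 1)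
    (h : ∀ a b, u a b ≤ u' a b) : valGF u ≤ valGF u' := by
  have h2 := valGF_sub_le (u := u) (u' := u') (le_refl (0:ℝ)) h1' (fun a b => by have := h a b; linarith)
  rw [add_zero] at h2
  exact h2

lemma mem_OptA_iff (u : A → B → ℝ) (σA : FDist A) :
    σA ∈ OptA u ↔ valStratGF u σA = valGF u := Iff.rfl

end ValGF

/-! ### lift and locPay -/

section LiftStep
variable (δ : Q → A → B → D) (dist : D → FDist Q)

lemma lift_nonneg {v : Q → ℝ} (hv : ∀ q, 0 ≤ v q) (d : D) : 0 ≤ lift dist v d :=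
  Finset.sum_nonneg fun q _ => mul_nonneg (fd_nonneg _ _) (hv q)

lemma lift_le_one {v : Q → ℝ} (hv : ∀ q, v q ≤ 1) (d : D) : lift dist v d ≤ 1 := by
  unfold lift
  calc ∑ q, (dist d).1 q * v q ≤ ∑ q, (dist d).1 q * 1 :=
        Finset.sum_le_sum fun q _ => mul_le_mul_of_nonneg_left (hv q) (fd_nonneg _ _)
    _ = 1 := by rw [← Finset.sum_mul, fd_sum, one_mul]

lemma lift_mono {v v' : Q → ℝ} (h : ∀ q, v q ≤ v' q) (d : D) :
    lift dist v d ≤ lift dist v' d :=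
  Finset.sum_le_sum fun q _ => mul_le_mul_of_nonneg_left (h q) (fd_nonneg _ _)

lemma lift_sub_le {v v' : Q → ℝ} {c : ℝ} (h : ∀ q, v q ≤ v' q + c) (d : D) :
    lift dist v d ≤ lift dist v' d + c := by
  unfold lift
  have : ∑ q, (dist d).1 q * v q ≤ ∑ q, ((dist d).1 q * v' q + (dist d).1 q * c) := by
    apply Finset.sum_le_sum
    intro q _
    have := mul_le_mul_of_nonneg_left (h q) (fd_nonneg (dist d) q)
    linarith
  rw [Finset.sum_add_distrib, ← Finset.sum_mul, fd_sum, one_mul] at this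
  exact this

lemma lift_eq_zero {v : Q → ℝ} (hv : ∀ q, 0 ≤ v q) {d : D}
    (h : lift dist v d = 0) {q : Q} (hq : (dist d).1 q ≠ 0) : v q = 0 := by
  have hterm : ∀ x ∈ Finset.univ, (0:ℝ) ≤ (dist d).1 x * v x :=
    fun x _ => mul_nonneg (fd_nonneg _ _) (hv x)
  have := (Finset.sum_eq_zero_iff_of_nonneg hterm).1 h q (Finset.mem_univ q)
  rcases mul_eq_zero.1 this with h' | h'
  · exact absurd h' hq
  · exact h'

/-! ### step -/

lemma step_nonneg (σA : FDist A) (σB : FDist B) (q q' : Q) :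
    0 ≤ step δ dist σA σB q q' :=
  Finset.sum_nonneg fun a _ => Finset.sum_nonneg fun b _ =>
    mul_nonneg (mul_nonneg (fd_nonneg _ _) (fd_nonneg _ _)) (fd_nonneg _ _)

lemma sum_step_mul (σA : FDist A) (σB : FDist B) (q : Q) (v : Q → ℝ) :
    ∑ q', step δ dist σA σB q q' * v q'
      = out (fun a b => lift dist v (δ q a b)) σA σB := by
  unfold step out lift
  simp only [Finset.sum_mul, Finset.mul_sum]
  rw [Finset.sum_comm]
  refine Finset.sum_congr rfl fun a _ => ?_
  rw [Finset.sum_comm]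
  exact Finset.sum_congr rfl fun b _ => Finset.sum_congr rfl fun q' _ => by ring

lemma step_sum_one (σA : FDist A) (σB : FDist B) (q : Q) :
    ∑ q', step δ dist σA σB q q' = 1 := by
  have := sum_step_mul δ dist σA σB q (fun _ => 1)
  simp only [mul_one] at this
  rw [this]
  unfold out lift
  have : ∀ a b, ∑ q', (dist (δ q a b)).1 q' * 1 = 1 := by
    intro a b; simp [fd_sum]
  calc ∑ a, ∑ b, σA.1 a * σB.1 b * (∑ q', (dist (δ q a b)).1 q' * 1)
      = ∑ a, ∑ b, σA.1 a * σB.1 b := by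
        refine Finset.sum_congr rfl fun a _ => Finset.sum_congr rfl fun b _ => ?_
        rw [this a b, mul_one]
    _ = (∑ a, σA.1 a) * (∑ b, σB.1 b) := by rw [Finset.sum_mul_sum]
    _ = 1 := by rw [fd_sum, fd_sum, one_mul]

lemma sum_step_dirac_mul [DecidableEq B] (σA : FDist A) (b : B) (q : Q) (v : Q → ℝ) :
    ∑ q', step δ dist σA (dirac b) q q' * v q'
      = outB (fun a b => lift dist v (δ q a b)) σA b := by
  rw [sum_step_mul, out_dirac]

lemma step_mix [DecidableEq B] (σA : FDist A) (σB : FDist B) (q : Q) (v : Q → ℝ) :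
    ∑ q', step δ dist σA σB q q' * v q'
      = ∑ b, σB.1 b * ∑ q', step δ dist σA (dirac b) q q' * v q' := by
  rw [sum_step_mul, out_eq_sum_outB]
  congr 1; ext b
  rw [sum_step_dirac_mul]

lemma step_dirac_ne_zero [DecidableEq B] {σA : FDist A} {b : B} {q q' : Q}
    (h : step δ dist σA (dirac b) q q' ≠ 0) :
    ∃ a, σA.1 a ≠ 0 ∧ (dist (δ q a b)).1 q' ≠ 0 := by
  by_contra hc
  push_neg at hc
  apply h
  unfold step
  apply Finset.sum_eq_zero
  intro a _
  apply Finset.sum_eq_zero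
  intro b' _
  by_cases ha : σA.1 a = 0
  · rw [ha]; ring
  · by_cases hb : b' = b
    · subst hb; rw [hc a ha]; ring
    · rw [dirac_apply, if_neg hb]; ring

lemma step_dirac_pos_of [DecidableEq B] {σA : FDist A} {b : B} {q q' : Q} {a : A}
    (ha : σA.1 a ≠ 0) (hd : (dist (δ q a b)).1 q' ≠ 0) :
    step δ dist σA (dirac b) q q' ≠ 0 := by
  unfold step
  have hpos : 0 < σA.1 a * (dirac b).1 b * (dist (δ q a b)).1 q' := by
    rw [dirac_apply, if_pos rfl, mul_one]
    exact mul_pos (lt_of_le_of_ne (fd_nonneg _ _) (Ne.symm ha))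
      (lt_of_le_of_ne (fd_nonneg _ _) (Ne.symm hd))
  have h1 : ∀ a' ∈ Finset.univ, (0:ℝ) ≤ ∑ b', σA.1 a' * (dirac b).1 b' * (dist (δ q a' b')).1 q' :=
    fun a' _ => Finset.sum_nonneg fun b' _ =>
      mul_nonneg (mul_nonneg (fd_nonneg _ _) (fd_nonneg _ _)) (fd_nonneg _ _)
  have h2 : (0:ℝ) < ∑ b', σA.1 a * (dirac b).1 b' * (dist (δ q a b')).1 q' := by
    apply Finset.sum_pos' (fun b' _ =>
      mul_nonneg (mul_nonneg (fd_nonneg _ _) (fd_nonneg _ _)) (fd_nonneg _ _))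
    exact ⟨b, Finset.mem_univ b, hpos⟩
  have := Finset.sum_pos' h1 ⟨a, Finset.mem_univ a, h2⟩
  linarith

lemma step_absorbing [DecidableEq B] {T : Q} (habs : Absorbing δ dist T)
    (σA : FDist A) (σB : FDist B) (q' : Q) :
    step δ dist σA σB T q' = if q' = T then 1 else 0 := by
  unfold step
  have : ∀ a b, (dist (δ T a b)).1 q' = if q' = T then 1 else 0 := by
    intro a b; rw [habs a b]
  calc ∑ a, ∑ b, σA.1 a * σB.1 b * (dist (δ T a b)).1 q'
      = ∑ a, ∑ b, σA.1 a * σB.1 b * (if q' = T then 1 else 0) := by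
        refine Finset.sum_congr rfl fun a _ => Finset.sum_congr rfl fun b _ => ?_
        rw [this]
    _ = (∑ a, σA.1 a) * (∑ b, σB.1 b) * (if q' = T then 1 else 0) := by
        rw [Finset.sum_mul_sum, Finset.sum_mul]
        refine Finset.sum_congr rfl fun a _ => ?_
        rw [Finset.sum_mul]
    _ = if q' = T then 1 else 0 := by rw [fd_sum, fd_sum]; ring

end LiftStep

end Dev
end CRG
namespace CRG
section Dev2
set_option linter.unusedSectionVars false
variable {A B Q D : Type} [Fintype A] [Fintype B] [Fintype Q] [Fintype D]
variable [Nonempty A] [Nonempty B] [Nonempty Q] [Nonempty D] [DecidableEq Q]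

instance {X : Type} [Fintype X] [Nonempty X] : Nonempty (Strat Q X) :=
  ⟨fun _ _ => Classical.arbitrary _⟩

variable (δ : Q → A → B → D) (dist : D → FDist Q) (T : Q)

lemma aux_zero (sA : Strat Q A) (sB : Strat Q B) (h : List Q) (q : Q) :
    reachSetNAux δ dist {T} 0 sA sB h q = if q = T then 1 else 0 := by
  unfold reachSetNAux
  simp [Set.mem_singleton_iff]

lemma aux_succ (n : ℕ) (sA : Strat Q A) (sB : Strat Q B) (h : List Q) (q : Q) :
    reachSetNAux δ dist {T} (n+1) sA sB h q = if q = T then 1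
      else ∑ q', step δ dist (sA h q) (sB h q) q q' * reachSetNAux δ dist {T} n sA sB (h ++ [q]) q' := by
  conv_lhs => rw [reachSetNAux]
  simp [Set.mem_singleton_iff]

lemma aux_T (n : ℕ) (sA : Strat Q A) (sB : Strat Q B) (h : List Q) :
    reachSetNAux δ dist {T} n sA sB h T = 1 := by
  cases n with
  | zero => rw [aux_zero]; simp
  | succ n => rw [aux_succ]; simp

lemma aux_nonneg (n : ℕ) (sA : Strat Q A) (sB : Strat Q B) (h : List Q) (q : Q) :
    0 ≤ reachSetNAux δ dist {T} n sA sB h q := by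
  induction n generalizing h q with
  | zero => rw [aux_zero]; split <;> norm_num
  | succ n ih =>
    rw [aux_succ]
    split
    · norm_num
    · exact Finset.sum_nonneg fun q' _ =>
        mul_nonneg (step_nonneg δ dist _ _ _ _) (ih _ _)

lemma aux_le_one (n : ℕ) (sA : Strat Q A) (sB : Strat Q B) (h : List Q) (q : Q) :
    reachSetNAux δ dist {T} n sA sB h q ≤ 1 := by
  induction n generalizing h q with
  | zero => rw [aux_zero]; split <;> norm_num
  | succ n ih =>
    rw [aux_succ]
    split
    · norm_num
    · calc ∑ q', step δ dist (sA h q) (sB h q) q q' * reachSetNAux δ dist {T} n sA sB (h ++ [q]) q'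
          ≤ ∑ q', step δ dist (sA h q) (sB h q) q q' * 1 :=
            Finset.sum_le_sum fun q' _ =>
              mul_le_mul_of_nonneg_left (ih _ _) (step_nonneg δ dist _ _ _ _)
        _ = 1 := by
            simp only [mul_one]
            exact step_sum_one δ dist _ _ _

lemma aux_mono (n : ℕ) (sA : Strat Q A) (sB : Strat Q B) (h : List Q) (q : Q) :
    reachSetNAux δ dist {T} n sA sB h q ≤ reachSetNAux δ dist {T} (n+1) sA sB h q := by
  induction n generalizing h q with
  | zero =>
    rw [aux_zero, aux_succ]
    split
    · norm_num
    · exact Finset.sum_nonneg fun q' _ =>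
        mul_nonneg (step_nonneg δ dist _ _ _ _) (aux_nonneg δ dist T _ _ _ _ _)
  | succ n ih =>
    rw [aux_succ, aux_succ]
    split
    · norm_num
    · exact Finset.sum_le_sum fun q' _ =>
        mul_le_mul_of_nonneg_left (ih _ _) (step_nonneg δ dist _ _ _ _)

lemma aux_shift (n : ℕ) (sA : Strat Q A) (sB : Strat Q B) (π h : List Q) (q : Q) :
    reachSetNAux δ dist {T} n sA sB (π ++ h) q = reachSetNAux δ dist {T} n (residual sA π) (residual sB π) h q := by
  induction n generalizing h q with
  | zero => rw [aux_zero, aux_zero]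
  | succ n ih =>
    rw [aux_succ, aux_succ]
    split
    · rfl
    · refine Finset.sum_congr rfl fun q' _ => ?_
      congr 1
      rw [List.append_assoc]
      exact ih (h ++ [q]) q'

lemma aux_congrB (n : ℕ) (sA : Strat Q A) (sB sB' : Strat Q B) (h : List Q) (q : Q)
    (hq : sB h q = sB' h q)
    (hext : ∀ t x, sB (h ++ q :: t) x = sB' (h ++ q :: t) x) :
    reachSetNAux δ dist {T} n sA sB h q = reachSetNAux δ dist {T} n sA sB' h q := by
  induction n generalizing h q with
  | zero => rw [aux_zero, aux_zero]
  | succ n ih =>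
    rw [aux_succ, aux_succ]
    split
    · rfl
    · rw [hq]
      refine Finset.sum_congr rfl fun q' _ => ?_
      congr 1
      apply ih
      · exact hext [] q'
      · intro t x
        have h1 : (h ++ [q]) ++ q' :: t = h ++ q :: (q' :: t) := by
          rw [List.append_assoc]
          rfl
        rw [h1]
        exact hext (q' :: t) x

/-! ### reach -/

lemma reachN_eq (n : ℕ) (sA : Strat Q A) (sB : Strat Q B) (q : Q) :
    reachN δ dist T n sA sB q = reachSetNAux δ dist {T} n sA sB [] q := rfl

lemma reachN_mono (sA : Strat Q A) (sB : Strat Q B) (q : Q) :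
    Monotone fun n => reachN δ dist T n sA sB q :=
  monotone_nat_of_le_succ fun n => aux_mono δ dist T n sA sB [] q

lemma bddAbove_reachN (sA : Strat Q A) (sB : Strat Q B) (q : Q) :
    BddAbove (Set.range fun n => reachN δ dist T n sA sB q) :=
  ⟨1, by rintro x ⟨n, rfl⟩; exact aux_le_one δ dist T n sA sB [] q⟩

lemma reachN_le_reach (n : ℕ) (sA : Strat Q A) (sB : Strat Q B) (q : Q) :
    reachN δ dist T n sA sB q ≤ reach δ dist T sA sB q :=
  le_ciSup (bddAbove_reachN δ dist T sA sB q) n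

lemma reach_le (sA : Strat Q A) (sB : Strat Q B) (q : Q) {c : ℝ}
    (hc : ∀ n, reachN δ dist T n sA sB q ≤ c) : reach δ dist T sA sB q ≤ c :=
  ciSup_le hc

lemma reach_nonneg (sA : Strat Q A) (sB : Strat Q B) (q : Q) :
    0 ≤ reach δ dist T sA sB q :=
  (aux_nonneg δ dist T 0 sA sB [] q).trans (reachN_le_reach δ dist T 0 sA sB q)

lemma reach_le_one (sA : Strat Q A) (sB : Strat Q B) (q : Q) :
    reach δ dist T sA sB q ≤ 1 :=
  reach_le δ dist T sA sB q fun n => aux_le_one δ dist T n sA sB [] q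

lemma reach_T (sA : Strat Q A) (sB : Strat Q B) :
    reach δ dist T sA sB T = 1 := by
  apply le_antisymm (reach_le_one δ dist T sA sB T)
  have := reachN_le_reach δ dist T 0 sA sB T
  rw [reachN_eq, aux_T] at this
  exact this

lemma reach_congrB (sA : Strat Q A) (sB sB' : Strat Q B) (q : Q)
    (hq : sB [] q = sB' [] q)
    (hext : ∀ t x, sB (q :: t) x = sB' (q :: t) x) :
    reach δ dist T sA sB q = reach δ dist T sA sB' q := by
  unfold reach
  congr 1
  ext n
  rw [reachN_eq, reachN_eq]
  exact aux_congrB δ dist T n sA sB sB' [] q hq hext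

/-- Monotone convergence for finite sums of bounded monotone sequences. -/
lemma sup_sum_exchange (c : Q → ℝ) (hc : ∀ q, 0 ≤ c q) (f : ℕ → Q → ℝ)
    (hmono : ∀ q, Monotone fun n => f n q) (hbd : ∀ n q, f n q ≤ 1) :
    ⨆ n, ∑ q, c q * f n q = ∑ q, c q * (⨆ n, f n q) := by
  have hbdd : ∀ q, BddAbove (Set.range fun n => f n q) := fun q =>
    ⟨1, by rintro x ⟨n, rfl⟩; exact hbd n q⟩
  have hlim : ∀ q : Q, Filter.Tendsto (fun n => c q * f n q) Filter.atTop
      (nhds (c q * (⨆ n, f n q))) := fun q =>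
    Filter.Tendsto.const_mul _ (tendsto_atTop_ciSup (hmono q) (hbdd q))
  have hsum : Filter.Tendsto (fun n => ∑ q, c q * f n q) Filter.atTop
      (nhds (∑ q, c q * (⨆ n, f n q))) :=
    tendsto_finset_sum _ fun q _ => hlim q
  have hFm : Monotone fun n => ∑ q, c q * f n q := by
    intro i j hij
    exact Finset.sum_le_sum fun q _ =>
      mul_le_mul_of_nonneg_left (hmono q hij) (hc q)
  have hFb : BddAbove (Set.range fun n => ∑ q, c q * f n q) := by
    refine ⟨∑ q, c q, ?_⟩
    rintro x ⟨n, rfl⟩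
    exact Finset.sum_le_sum fun q _ => by
      have := mul_le_mul_of_nonneg_left (hbd n q) (hc q)
      linarith
  have h2 : Filter.Tendsto (fun n => ∑ q, c q * f n q) Filter.atTop
      (nhds (⨆ n, ∑ q, c q * f n q)) := tendsto_atTop_ciSup hFm hFb
  exact tendsto_nhds_unique h2 hsum

/-- One-step decomposition of the reach probability. -/
lemma reach_decomp (habs : Absorbing δ dist T) (sA : Strat Q A) (sB : Strat Q B) (q : Q) :
    reach δ dist T sA sB q = ∑ q', step δ dist (sA [] q) (sB [] q) q q' *
      reach δ dist T (residual sA [q]) (residual sB [q]) q' := by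
  have hstep : ∀ n, reachN δ dist T (n+1) sA sB q
      = ∑ q', step δ dist (sA [] q) (sB [] q) q q' *
        reachN δ dist T n (residual sA [q]) (residual sB [q]) q' := by
    intro n
    rw [reachN_eq, aux_succ]
    by_cases hq : q = T
    · rw [if_pos hq]
      have h1 : ∀ q', step δ dist (sA [] q) (sB [] q) q q' *
          reachN δ dist T n (residual sA [q]) (residual sB [q]) q'
          = if q' = T then reachN δ dist T n (residual sA [q]) (residual sB [q]) q' else 0 := by
        intro q'
        by_cases hq' : q' = T
        · rw [if_pos hq']
          have hs : step δ dist (sA [] q) (sB [] q) q q' = 1 := by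
            rw [hq, step_absorbing δ dist habs, if_pos hq']
          rw [hs, one_mul]
        · rw [if_neg hq']
          have hs : step δ dist (sA [] q) (sB [] q) q q' = 0 := by
            rw [hq, step_absorbing δ dist habs, if_neg hq']
          rw [hs, zero_mul]
      rw [Finset.sum_congr rfl fun q' _ => h1 q']
      rw [Finset.sum_ite_eq' Finset.univ T]
      simp [reachN_eq, aux_T]
    · rw [if_neg hq]
      refine Finset.sum_congr rfl fun q' _ => ?_
      congr 1
      have := aux_shift δ dist T n sA sB [q] [] q'
      simpa [reachN, reachSetN] using this
  have hsup : reach δ dist T sA sB q = ⨆ n, reachN δ dist T (n+1) sA sB q := by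
    apply le_antisymm
    · apply reach_le
      intro n
      calc reachN δ dist T n sA sB q ≤ reachN δ dist T (n+1) sA sB q :=
            aux_mono δ dist T n sA sB [] q
        _ ≤ ⨆ n, reachN δ dist T (n+1) sA sB q := by
            apply le_ciSup (f := fun n => reachN δ dist T (n+1) sA sB q)
              ⟨1, by rintro x ⟨k, rfl⟩; exact aux_le_one δ dist T _ sA sB [] q⟩ n
    · exact ciSup_le fun n => reachN_le_reach δ dist T (n+1) sA sB q
  rw [hsup]
  have := sup_sum_exchange (c := fun q' => step δ dist (sA [] q) (sB [] q) q q')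
    (fun q' => step_nonneg δ dist _ _ _ _)
    (f := fun n q' => reachN δ dist T n (residual sA [q]) (residual sB [q]) q')
    (fun q' => reachN_mono δ dist T _ _ q')
    (fun n q' => aux_le_one δ dist T n _ _ [] q')
  rw [Finset.sum_congr rfl fun q' _ => rfl] at this
  calc (⨆ n, reachN δ dist T (n+1) sA sB q)
      = ⨆ n, ∑ q', step δ dist (sA [] q) (sB [] q) q q' *
          reachN δ dist T n (residual sA [q]) (residual sB [q]) q' := by
        congr 1; ext n; exact hstep n
    _ = ∑ q', step δ dist (sA [] q) (sB [] q) q q' *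
          reach δ dist T (residual sA [q]) (residual sB [q]) q' := this

/-- Supermartingale bound : if `sB` is stepwise safe w.r.t. `w` against `sA`,
the reach probability is at most `w`. -/
lemma reach_le_of_safe (sA : Strat Q A) (sB : Strat Q B) (w : Q → ℝ)
    (hw0 : ∀ q, 0 ≤ w q) (hwT : w T = 1)
    (hsafe : ∀ h q, q ≠ T → ∑ q', step δ dist (sA h q) (sB h q) q q' * w q' ≤ w q) :
    ∀ q, reach δ dist T sA sB q ≤ w q := by
  have haux : ∀ n h q, reachSetNAux δ dist {T} n sA sB h q ≤ w q := by
    intro n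
    induction n with
    | zero =>
      intro h q
      rw [aux_zero]
      split
      · subst ‹q = T›; rw [hwT]
      · exact hw0 q
    | succ n ih =>
      intro h q
      rw [aux_succ]
      split
      · subst ‹q = T›; rw [hwT]
      · calc ∑ q', step δ dist (sA h q) (sB h q) q q' * reachSetNAux δ dist {T} n sA sB (h ++ [q]) q'
            ≤ ∑ q', step δ dist (sA h q) (sB h q) q q' * w q' :=
              Finset.sum_le_sum fun q' _ =>
                mul_le_mul_of_nonneg_left (ih _ q') (step_nonneg δ dist _ _ _ _)
          _ ≤ w q := hsafe h q ‹¬ q = T›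
  intro q
  exact reach_le δ dist T sA sB q fun n => haux n [] q

/-! ### valA / value -/

lemma bddBelow_reach (sA : Strat Q A) (q : Q) :
    BddBelow (Set.range fun sB => reach δ dist T sA sB q) :=
  ⟨0, by rintro x ⟨sB, rfl⟩; exact reach_nonneg δ dist T sA sB q⟩

lemma valA_le_reach (sA : Strat Q A) (sB : Strat Q B) (q : Q) :
    valA δ dist T sA q ≤ reach δ dist T sA sB q :=
  ciInf_le (bddBelow_reach δ dist T sA q) sB

lemma le_valA (sA : Strat Q A) (q : Q) {c : ℝ}
    (hc : ∀ sB, c ≤ reach δ dist T sA sB q) : c ≤ valA δ dist T sA q :=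
  le_ciInf hc

lemma valA_nonneg (sA : Strat Q A) (q : Q) : 0 ≤ valA δ dist T sA q :=
  le_valA δ dist T sA q fun sB => reach_nonneg δ dist T sA sB q

lemma valA_le_one (sA : Strat Q A) (q : Q) : valA δ dist T sA q ≤ 1 :=
  (valA_le_reach δ dist T sA (Classical.arbitrary _) q).trans
    (reach_le_one δ dist T sA _ q)

lemma valA_le_value (sA : Strat Q A) (q : Q) :
    valA δ dist T sA q ≤ value δ dist T q := by
  apply le_ciSup (f := fun sA => valA δ dist T sA q)
    ⟨1, by rintro x ⟨s, rfl⟩; exact valA_le_one δ dist T s q⟩ sA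

lemma value_le (q : Q) {c : ℝ} (hc : ∀ sA, valA δ dist T sA q ≤ c) :
    value δ dist T q ≤ c := ciSup_le hc

lemma value_nonneg (q : Q) : 0 ≤ value δ dist T q :=
  (valA_nonneg δ dist T (Classical.arbitrary _) q).trans
    (valA_le_value δ dist T _ q)

lemma value_le_one (q : Q) : value δ dist T q ≤ 1 :=
  value_le δ dist T q fun sA => valA_le_one δ dist T sA q

end Dev2
end CRG
namespace CRG
section Dev3
set_option linter.unusedSectionVars false
set_option maxHeartbeats 1000000
variable {A B Q D : Type} [Fintype A] [Fintype B] [Fintype Q] [Fintype D]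
variable [Nonempty A] [Nonempty B] [Nonempty Q] [Nonempty D] [DecidableEq Q]
variable (δ : Q → A → B → D) (dist : D → FDist Q) (T : Q) (m : Q → ℝ)

/-! ### facts about the least fixed point m -/

lemma m_nonneg (hm : IsLfpDelta δ dist T m) (q : Q) : 0 ≤ m q := (hm.1 q).1

lemma m_le_one (hm : IsLfpDelta δ dist T m) (q : Q) : m q ≤ 1 := (hm.1 q).2

lemma m_T (hm : IsLfpDelta δ dist T m) : m T = 1 := by
  have := congrFun hm.2.1 T
  rw [Δop, if_pos rfl] at this
  exact this.symm

lemma m_fix (hm : IsLfpDelta δ dist T m) {q : Q} (hq : q ≠ T) :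
    valGF (locPay δ dist m q) = m q := by
  have := congrFun hm.2.1 q
  rw [Δop, if_neg hq] at this
  exact this

lemma locPay_nonneg (hm : IsLfpDelta δ dist T m) (q : Q) (a : A) (b : B) :
    0 ≤ locPay δ dist m q a b :=
  lift_nonneg dist (m_nonneg δ dist T m hm) _

lemma locPay_le_one (hm : IsLfpDelta δ dist T m) (q : Q) (a : A) (b : B) :
    locPay δ dist m q a b ≤ 1 :=
  lift_le_one dist (m_le_one δ dist T m hm) _

lemma valStrat_le_m (hm : IsLfpDelta δ dist T m) {q : Q} (hq : q ≠ T) (σ : FDist A) :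
    valStratGF (locPay δ dist m q) σ ≤ m q := by
  rw [← m_fix δ dist T m hm hq]
  exact valStratGF_le_valGF _ (locPay_le_one δ dist T m hm q) σ

/-- sum of one-step transition probabilities against `m` equals `outB` of the local game. -/
lemma step_m_outB (σ : FDist A) (b : B) (q : Q) (v : Q → ℝ) :
    ∑ q', step δ dist σ (dirac b) q q' * v q' = outB (locPay δ dist v q) σ b :=
  sum_step_dirac_mul δ dist σ b q v

/-- The greedy pure response of Player B to the strategy `sA`. -/
def greedyB (sA : Strat Q A) : Strat Q B :=
  fun h q => dirac (Classical.choose (exists_optAct (locPay δ dist m q) (sA h q)))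

lemma greedyB_opt (sA : Strat Q A) (h : List Q) (q : Q) :
    Classical.choose (exists_optAct (locPay δ dist m q) (sA h q))
      ∈ optActs (locPay δ dist m q) (sA h q) :=
  Classical.choose_spec (exists_optAct (locPay δ dist m q) (sA h q))

lemma greedyB_safe (hm : IsLfpDelta δ dist T m) (sA : Strat Q A) (h : List Q) {q : Q}
    (hq : q ≠ T) :
    ∑ q', step δ dist (sA h q) (greedyB δ dist m sA h q) q q' * m q' ≤ m q := by
  show ∑ q', step δ dist (sA h q) (dirac _) q q' * m q' ≤ m q
  rw [step_m_outB]
  rw [outB_optAct (greedyB_opt δ dist m sA h q)]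
  exact valStrat_le_m δ dist T m hm hq _

/-- Refined supermartingale bound : the greedy response of B yields at most `m`. -/
lemma reach_greedy_le_m (habs : Absorbing δ dist T) (hm : IsLfpDelta δ dist T m)
    (sA : Strat Q A) (q : Q) :
    reach δ dist T sA (greedyB δ dist m sA) q ≤ m q :=
  reach_le_of_safe δ dist T sA (greedyB δ dist m sA) m (m_nonneg δ dist T m hm)
    (m_T δ dist T m hm) (fun h q hq => greedyB_safe δ dist T m hm sA h hq) q

lemma valA_le_m (habs : Absorbing δ dist T) (hm : IsLfpDelta δ dist T m)
    (sA : Strat Q A) (q : Q) : valA δ dist T sA q ≤ m q :=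
  (valA_le_reach δ dist T sA (greedyB δ dist m sA) q).trans
    (reach_greedy_le_m δ dist T m habs hm sA q)

lemma value_le_m (habs : Absorbing δ dist T) (hm : IsLfpDelta δ dist T m) (q : Q) :
    value δ dist T q ≤ m q :=
  value_le δ dist T q fun sA => valA_le_m δ dist T m habs hm sA q

/-! ### discounted value iteration -/

/-- The discounted one-step operator. -/
def Phi (lam : ℝ) (v : Q → ℝ) : Q → ℝ :=
  fun q => if q = T then 1
    else lam * valGF (fun a b => lift dist v (δ q a b))

/-- Iterates of the discounted operator from 0. -/
def dIter (lam : ℝ) : ℕ → Q → ℝ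
  | 0 => fun _ => 0
  | n + 1 => Phi δ dist T lam (dIter lam n)

/-- The discounted value. -/
def vlam (lam : ℝ) : Q → ℝ := fun q => ⨆ n, dIter δ dist T lam n q

variable {lam lam' : ℝ}

lemma Phi_nonneg (h0 : 0 ≤ lam) {v : Q → ℝ} (hv0 : ∀ q, 0 ≤ v q) (hv1 : ∀ q, v q ≤ 1)
    (q : Q) : 0 ≤ Phi δ dist T lam v q := by
  unfold Phi
  split
  · norm_num
  · exact mul_nonneg h0 (valGF_nonneg _ (fun a b => lift_nonneg dist hv0 _)
      (fun a b => lift_le_one dist hv1 _))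

lemma Phi_le_one (h1 : lam ≤ 1) (h0 : 0 ≤ lam) {v : Q → ℝ} (hv1 : ∀ q, v q ≤ 1) (q : Q) :
    Phi δ dist T lam v q ≤ 1 := by
  unfold Phi
  split
  · norm_num
  · have hv := valGF_le_one (fun a b => lift dist v (δ q a b))
      (fun a b => lift_le_one dist hv1 _)
    nlinarith

lemma Phi_mono2 (h0 : 0 ≤ lam) (hll : lam ≤ lam') {v v' : Q → ℝ}
    (hv' : ∀ q, v' q ≤ 1) (hv'0 : ∀ q, 0 ≤ v' q) (hle : ∀ q, v q ≤ v' q) (q : Q) :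
    Phi δ dist T lam v q ≤ Phi δ dist T lam' v' q := by
  unfold Phi
  split
  · norm_num
  · have hval : valGF (fun a b => lift dist v (δ q a b))
        ≤ valGF (fun a b => lift dist v' (δ q a b)) :=
      valGF_mono (fun a b => lift_le_one dist hv' _) (fun a b => lift_mono dist hle _)
    have hval0 : 0 ≤ valGF (fun a b => lift dist v' (δ q a b)) :=
      valGF_nonneg _ (fun a b => lift_nonneg dist hv'0 _)
        (fun a b => lift_le_one dist hv' _)
    calc lam * valGF (fun a b => lift dist v (δ q a b))
        ≤ lam * valGF (fun a b => lift dist v' (δ q a b)) := by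
          exact mul_le_mul_of_nonneg_left hval h0
      _ ≤ lam' * valGF (fun a b => lift dist v' (δ q a b)) := by
          exact mul_le_mul_of_nonneg_right hll hval0

lemma dIter_nonneg (h0 : 0 ≤ lam) (h1 : lam ≤ 1) : ∀ n q, 0 ≤ dIter δ dist T lam n q ∧
    dIter δ dist T lam n q ≤ 1 := by
  intro n
  induction n with
  | zero => intro q; exact ⟨le_refl 0, by show (0:ℝ) ≤ 1; norm_num⟩
  | succ n ih =>
    intro q
    constructor
    · exact Phi_nonneg δ dist T h0 (fun x => (ih x).1) (fun x => (ih x).2) q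
    · exact Phi_le_one δ dist T h1 h0 (fun x => (ih x).2) q

lemma dIter_mono_n (h0 : 0 ≤ lam) (h1 : lam ≤ 1) (n : ℕ) (q : Q) :
    dIter δ dist T lam n q ≤ dIter δ dist T lam (n+1) q := by
  induction n generalizing q with
  | zero =>
    exact Phi_nonneg δ dist T h0 (fun x => le_refl 0) (fun x => by norm_num) q
  | succ n ih =>
    exact Phi_mono2 δ dist T h0 (le_refl lam)
      (fun x => (dIter_nonneg δ dist T h0 h1 (n+1) x).2)
      (fun x => (dIter_nonneg δ dist T h0 h1 (n+1) x).1) ih q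

lemma dIter_monotone (h0 : 0 ≤ lam) (h1 : lam ≤ 1) (q : Q) :
    Monotone fun n => dIter δ dist T lam n q :=
  monotone_nat_of_le_succ fun n => dIter_mono_n δ dist T h0 h1 n q

lemma dIter_le_m (hm : IsLfpDelta δ dist T m) (h0 : 0 ≤ lam) (h1 : lam ≤ 1) :
    ∀ n q, dIter δ dist T lam n q ≤ m q := by
  intro n
  induction n with
  | zero => intro q; exact m_nonneg δ dist T m hm q
  | succ n ih =>
    intro q
    show Phi δ dist T lam (dIter δ dist T lam n) q ≤ m q
    unfold Phi
    split
    · rw [‹q = T›, m_T δ dist T m hm]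
    · calc lam * valGF (fun a b => lift dist (dIter δ dist T lam n) (δ q a b))
          ≤ 1 * valGF (fun a b => lift dist m (δ q a b)) := by
            apply mul_le_mul h1
              (valGF_mono (fun a b => lift_le_one dist (m_le_one δ dist T m hm) _)
                (fun a b => lift_mono dist ih _))
              (valGF_nonneg _
                (fun a b => lift_nonneg dist (fun x => (dIter_nonneg δ dist T h0 h1 n x).1) _)
                (fun a b => lift_le_one dist (fun x => (dIter_nonneg δ dist T h0 h1 n x).2) _))
              (by norm_num)
        _ = valGF (locPay δ dist m q) := by rw [one_mul]; rfl
        _ = m q := m_fix δ dist T m hm ‹¬ q = T›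

lemma bddAbove_dIter (h0 : 0 ≤ lam) (h1 : lam ≤ 1) (q : Q) :
    BddAbove (Set.range fun n => dIter δ dist T lam n q) :=
  ⟨1, by rintro x ⟨n, rfl⟩; exact (dIter_nonneg δ dist T h0 h1 n q).2⟩

lemma dIter_le_vlam (h0 : 0 ≤ lam) (h1 : lam ≤ 1) (n : ℕ) (q : Q) :
    dIter δ dist T lam n q ≤ vlam δ dist T lam q :=
  le_ciSup (bddAbove_dIter δ dist T h0 h1 q) n

lemma vlam_nonneg (h0 : 0 ≤ lam) (h1 : lam ≤ 1) (q : Q) : 0 ≤ vlam δ dist T lam q :=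
  le_trans (le_refl 0) ((dIter_nonneg δ dist T h0 h1 0 q).1.trans
    (dIter_le_vlam δ dist T h0 h1 0 q))

lemma vlam_le_one (h0 : 0 ≤ lam) (h1 : lam ≤ 1) (q : Q) : vlam δ dist T lam q ≤ 1 :=
  ciSup_le fun n => (dIter_nonneg δ dist T h0 h1 n q).2

lemma vlam_le_m (hm : IsLfpDelta δ dist T m) (h0 : 0 ≤ lam) (h1 : lam ≤ 1) (q : Q) :
    vlam δ dist T lam q ≤ m q :=
  ciSup_le fun n => dIter_le_m δ dist T m hm h0 h1 n q

lemma vlam_T (h0 : 0 ≤ lam) (h1 : lam ≤ 1) : vlam δ dist T lam T = 1 := by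
  apply le_antisymm (vlam_le_one δ dist T h0 h1 T)
  have : dIter δ dist T lam 1 T = 1 := by
    show Phi δ dist T lam _ T = 1
    unfold Phi
    rw [if_pos rfl]
  rw [← this]
  exact dIter_le_vlam δ dist T h0 h1 1 T

/-- Uniform approximation of the sup by the iterates. -/
lemma vlam_unif (h0 : 0 ≤ lam) (h1 : lam ≤ 1) {ε : ℝ} (hε : 0 < ε) :
    ∃ N, ∀ q, vlam δ dist T lam q - ε ≤ dIter δ dist T lam N q := by
  have : ∀ q : Q, ∃ n, vlam δ dist T lam q - ε < dIter δ dist T lam n q := by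
    intro q
    apply exists_lt_of_lt_ciSup
    have := vlam_nonneg δ dist T h0 h1 q
    show vlam δ dist T lam q - ε < vlam δ dist T lam q
    linarith
  choose nf hnf using this
  refine ⟨Finset.univ.sup nf, fun q => ?_⟩
  have hle : nf q ≤ Finset.univ.sup nf := Finset.le_sup (Finset.mem_univ q)
  have := dIter_monotone δ dist T h0 h1 q hle
  linarith [hnf q]

/-- `vlam` is a fixed point of the discounted operator. -/
lemma vlam_fix (h0 : 0 < lam) (h1 : lam < 1) (q : Q) :
    Phi δ dist T lam (vlam δ dist T lam) q = vlam δ dist T lam q := by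
  have h0' := le_of_lt h0
  have h1' := le_of_lt h1
  apply le_antisymm
  · -- ≤ : by uniform approximation
    have hle : ∀ ε : ℝ, 0 < ε → Phi δ dist T lam (vlam δ dist T lam) q
        ≤ vlam δ dist T lam q + ε := by
      intro ε hε
      obtain ⟨N, hN⟩ := vlam_unif δ dist T h0' h1' hε
      have hPhi : Phi δ dist T lam (vlam δ dist T lam) q
          ≤ Phi δ dist T lam (dIter δ dist T lam N) q + ε := by
        unfold Phi
        split
        · linarith
        · have hval : valGF (fun a b => lift dist (vlam δ dist T lam) (δ q a b))
              ≤ valGF (fun a b => lift dist (dIter δ dist T lam N) (δ q a b)) + ε := by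
            apply valGF_sub_le (le_of_lt hε)
              (fun a b => lift_le_one dist (fun x => (dIter_nonneg δ dist T h0' h1' N x).2) _)
            intro a b
            exact lift_sub_le dist (fun x => by linarith [hN x]) _
          calc lam * valGF (fun a b => lift dist (vlam δ dist T lam) (δ q a b))
              ≤ lam * (valGF (fun a b => lift dist (dIter δ dist T lam N) (δ q a b)) + ε) :=
                mul_le_mul_of_nonneg_left hval h0'
            _ ≤ lam * valGF (fun a b => lift dist (dIter δ dist T lam N) (δ q a b)) + ε := by
                nlinarith
      calc Phi δ dist T lam (vlam δ dist T lam) q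
          ≤ Phi δ dist T lam (dIter δ dist T lam N) q + ε := hPhi
        _ = dIter δ dist T lam (N+1) q + ε := rfl
        _ ≤ vlam δ dist T lam q + ε := by linarith [dIter_le_vlam δ dist T h0' h1' (N+1) q]
    by_contra hc
    push_neg at hc
    have : 0 < (Phi δ dist T lam (vlam δ dist T lam) q - vlam δ dist T lam q) / 2 := by
      linarith
    have := hle _ this
    linarith
  · -- ≥ : each iterate is below
    apply ciSup_le
    intro n
    cases n with
    | zero =>
      exact Phi_nonneg δ dist T h0' (vlam_nonneg δ dist T h0' h1')
        (vlam_le_one δ dist T h0' h1') q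
    | succ n =>
      show Phi δ dist T lam (dIter δ dist T lam n) q ≤ _
      exact Phi_mono2 δ dist T h0' (le_refl lam) (vlam_le_one δ dist T h0' h1')
        (vlam_nonneg δ dist T h0' h1') (dIter_le_vlam δ dist T h0' h1' n) q

/-- The defining equation of the discounted value off the target. -/
lemma vlam_eq (h0 : 0 < lam) (h1 : lam < 1) {q : Q} (hq : q ≠ T) :
    lam * valGF (fun a b => lift dist (vlam δ dist T lam) (δ q a b))
      = vlam δ dist T lam q := by
  have := vlam_fix δ dist T h0 h1 q
  unfold Phi at this
  rw [if_neg hq] at this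
  exact this

lemma vlam_mono_lam (h0 : 0 < lam) (h1 : lam ≤ lam') (h1' : lam' ≤ 1) (q : Q) :
    vlam δ dist T lam q ≤ vlam δ dist T lam' q := by
  have h00 : (0:ℝ) ≤ lam := le_of_lt h0
  have h0'' : (0:ℝ) ≤ lam' := le_trans h00 h1
  have hiter : ∀ n q, dIter δ dist T lam n q ≤ dIter δ dist T lam' n q := by
    intro n
    induction n with
    | zero => intro q; exact le_refl 0
    | succ n ih =>
      intro q
      exact Phi_mono2 δ dist T h00 h1
        (fun x => (dIter_nonneg δ dist T h0'' h1' n x).2)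
        (fun x => (dIter_nonneg δ dist T h0'' h1' n x).1) ih q
  exact ciSup_le fun n => (hiter n q).trans (dIter_le_vlam δ dist T h0'' h1' n q)

end Dev3
end CRG
namespace CRG
section Dev4
set_option linter.unusedSectionVars false
set_option maxHeartbeats 1000000
variable {A B Q D : Type} [Fintype A] [Fintype B] [Fintype Q] [Fintype D]
variable [Nonempty A] [Nonempty B] [Nonempty Q] [Nonempty D] [DecidableEq Q]
variable (δ : Q → A → B → D) (dist : D → FDist Q) (T : Q) (m : Q → ℝ)

/-- The sequence of discount factors converging to 1. -/
def lamseq (k : ℕ) : ℝ := 1 - 1 / (k + 2)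

lemma lamseq_pos (k : ℕ) : 0 < lamseq k := by
  unfold lamseq
  have hk0 : (0:ℝ) ≤ (k:ℝ) := Nat.cast_nonneg k
  have h2 : (2:ℝ) ≤ (k:ℝ) + 2 := by linarith
  have : 1 / ((k:ℝ) + 2) ≤ 1/2 := by
    apply one_div_le_one_div_of_le <;> linarith
  linarith

lemma lamseq_lt_one (k : ℕ) : lamseq k < 1 := by
  unfold lamseq
  have : 0 < 1 / ((k:ℝ) + 2) := by positivity
  linarith

lemma lamseq_mono {k k' : ℕ} (h : k ≤ k') : lamseq k ≤ lamseq k' := by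
  unfold lamseq
  have hk : (k:ℝ) + 2 ≤ (k':ℝ) + 2 := by
    have : (k:ℝ) ≤ k' := Nat.cast_le.2 h
    linarith
  have := one_div_le_one_div_of_le (by positivity : (0:ℝ) < (k:ℝ) + 2) hk
  linarith

lemma lamseq_ratio (k : ℕ) : (1 - lamseq k) / lamseq k ≤ 1 / (k + 1) := by
  unfold lamseq
  have hk2 : (0:ℝ) < (k:ℝ) + 2 := by positivity
  have hk1 : (0:ℝ) < (k:ℝ) + 1 := by positivity
  have hl : 1 - (1 - 1 / ((k:ℝ) + 2)) = 1 / ((k:ℝ)+2) := by ring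
  rw [hl]
  have hden : 1 - 1 / ((k:ℝ) + 2) = ((k:ℝ)+1)/((k:ℝ)+2) := by
    field_simp
    ring
  have h : (1 / ((k:ℝ)+2)) / (((k:ℝ)+1)/((k:ℝ)+2)) = 1/((k:ℝ)+1) := by
    field_simp
  rw [hden, h]

/-- `wstar` : the limit of the discounted values. -/
def wstar : Q → ℝ := fun q => ⨆ k, vlam δ dist T (lamseq k) q

lemma vlam_le_wstar (k : ℕ) (q : Q) : vlam δ dist T (lamseq k) q ≤ wstar δ dist T q := by
  unfold wstar
  apply le_ciSup (f := fun k : ℕ => vlam δ dist T (lamseq k) q) ?_ k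
  refine ⟨1, ?_⟩
  rintro x ⟨k', rfl⟩
  exact vlam_le_one δ dist T (le_of_lt (lamseq_pos k')) (le_of_lt (lamseq_lt_one k')) q

lemma wstar_le_m (hm : IsLfpDelta δ dist T m) (q : Q) : wstar δ dist T q ≤ m q := by
  unfold wstar
  exact ciSup_le fun k => vlam_le_m δ dist T m hm (le_of_lt (lamseq_pos k))
    (le_of_lt (lamseq_lt_one k)) q

lemma wstar_nonneg (q : Q) : 0 ≤ wstar δ dist T q :=
  le_trans (vlam_nonneg δ dist T (le_of_lt (lamseq_pos 0))
    (le_of_lt (lamseq_lt_one 0)) q) (vlam_le_wstar δ dist T 0 q)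

lemma wstar_le_one (q : Q) : wstar δ dist T q ≤ 1 := by
  unfold wstar
  exact ciSup_le fun k => vlam_le_one δ dist T (le_of_lt (lamseq_pos k))
    (le_of_lt (lamseq_lt_one k)) q

lemma wstar_T : wstar δ dist T T = 1 := by
  apply le_antisymm (wstar_le_one δ dist T T)
  rw [← vlam_T δ dist T (le_of_lt (lamseq_pos 0)) (le_of_lt (lamseq_lt_one 0))]
  exact vlam_le_wstar δ dist T 0 T

lemma wstar_unif {ε : ℝ} (hε : 0 < ε) :
    ∃ k : ℕ, (1:ℝ) / ((k:ℝ)+1) ≤ ε ∧ ∀ q, wstar δ dist T q - ε ≤ vlam δ dist T (lamseq k) q := by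
  have h1 : ∀ q : Q, ∃ k, wstar δ dist T q - ε < vlam δ dist T (lamseq k) q := by
    intro q
    apply exists_lt_of_lt_ciSup (f := fun k : ℕ => vlam δ dist T (lamseq k) q)
    show wstar δ dist T q - ε < wstar δ dist T q
    linarith
  choose kf hkf using h1
  obtain ⟨k0, hk0⟩ := exists_nat_gt (1/ε)
  refine ⟨max k0 (Finset.univ.sup kf), ?_, ?_⟩
  · have hk0' : (k0:ℝ) ≤ (max k0 (Finset.univ.sup kf) : ℕ) := by
      exact_mod_cast Nat.le_max_left _ _
    have hεinv : 0 < 1/ε := by positivity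
    have : 1 / ((max k0 (Finset.univ.sup kf) : ℕ) + 1 : ℝ) ≤ 1 / (k0 : ℝ) := by
      apply one_div_le_one_div_of_le
      · linarith
      · linarith
    have h2 : 1 / (k0:ℝ) ≤ ε := by
      rw [div_le_iff₀ (by linarith : (0:ℝ) < (k0:ℝ))]
      rw [div_lt_iff₀ hε] at hk0
      nlinarith
    linarith
  · intro q
    have hle : kf q ≤ max k0 (Finset.univ.sup kf) :=
      le_trans (Finset.le_sup (Finset.mem_univ q)) (Nat.le_max_right _ _)
    have := vlam_mono_lam δ dist T (lamseq_pos (kf q)) (lamseq_mono hle)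
      (le_of_lt (lamseq_lt_one _)) q
    linarith [hkf q]

/-- `wstar` is a fixed point of Δ. -/
lemma wstar_fix : Δop δ dist T (wstar δ dist T) = wstar δ dist T := by
  funext q
  by_cases hq : q = T
  · rw [hq, wstar_T]
    unfold Δop
    rw [if_pos rfl]
  · unfold Δop
    rw [if_neg hq]
    apply le_antisymm
    · -- valGF (lift wstar) ≤ wstar q
      have key : ∀ ε : ℝ, 0 < ε →
          valGF (fun a b => lift dist (wstar δ dist T) (δ q a b)) ≤ wstar δ dist T q + 2*ε := by
        intro ε hε
        obtain ⟨k, hk1, hk2⟩ := wstar_unif δ dist T hε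
        have h0k := le_of_lt (lamseq_pos k)
        have h1k := le_of_lt (lamseq_lt_one k)
        have hval : valGF (fun a b => lift dist (wstar δ dist T) (δ q a b))
            ≤ valGF (fun a b => lift dist (vlam δ dist T (lamseq k)) (δ q a b)) + ε := by
          apply valGF_sub_le (le_of_lt hε)
            (fun a b => lift_le_one dist (vlam_le_one δ dist T h0k h1k) _)
          intro a b
          exact lift_sub_le dist (fun x => by linarith [hk2 x]) _
        have heq := vlam_eq δ dist T (lamseq_pos k) (lamseq_lt_one k) hq
        have hvk1 := vlam_le_one δ dist T h0k h1k q
        have hvk0 := vlam_nonneg δ dist T h0k h1k q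
        -- valGF (lift vlam_k) = vlam_k q / lam_k ≤ vlam_k q + 1/(k+1)
        have hlam := lamseq_pos k
        have hgap : valGF (fun a b => lift dist (vlam δ dist T (lamseq k)) (δ q a b))
            ≤ vlam δ dist T (lamseq k) q + 1/(k+1) := by
          have hv : valGF (fun a b => lift dist (vlam δ dist T (lamseq k)) (δ q a b))
              = vlam δ dist T (lamseq k) q / lamseq k := by
            field_simp
            linarith [heq]
          rw [hv]
          have hratio := lamseq_ratio k
          have : vlam δ dist T (lamseq k) q / lamseq k - vlam δ dist T (lamseq k) q
              = vlam δ dist T (lamseq k) q * ((1 - lamseq k)/lamseq k) := by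
            field_simp
          have h1k1 : (0:ℝ) ≤ 1/((k:ℝ)+1) := by positivity
          have hmul := mul_le_mul_of_nonneg_left hratio hvk0
          have hmul2 : vlam δ dist T (lamseq k) q * (1/((k:ℝ)+1)) ≤ 1 * (1/((k:ℝ)+1)) :=
            mul_le_mul_of_nonneg_right hvk1 h1k1
          linarith [this]
        have := vlam_le_wstar δ dist T k q
        linarith
      by_contra hc
      push_neg at hc
      set d := valGF (fun a b => lift dist (wstar δ dist T) (δ q a b)) - wstar δ dist T q
      have hd : 0 < d := by simp only [d]; linarith
      have := key (d/4) (by linarith)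
      simp only [d] at this
      linarith
    · -- wstar q ≤ valGF (lift wstar)
      show wstar δ dist T q ≤ _
      unfold wstar
      apply ciSup_le
      intro k
      have h0k := lamseq_pos k
      have h1k := le_of_lt (lamseq_lt_one k)
      have heq := vlam_eq δ dist T h0k (lamseq_lt_one k) hq
      have hval : valGF (fun a b => lift dist (vlam δ dist T (lamseq k)) (δ q a b))
          ≤ valGF (fun a b => lift dist (wstar δ dist T) (δ q a b)) :=
        valGF_mono (fun a b => lift_le_one dist (wstar_le_one δ dist T) _)
          (fun a b => lift_mono dist (vlam_le_wstar δ dist T k) _)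
      have hval0 : 0 ≤ valGF (fun a b => lift dist (vlam δ dist T (lamseq k)) (δ q a b)) :=
        valGF_nonneg _
          (fun a b => lift_nonneg dist (vlam_nonneg δ dist T (le_of_lt h0k) h1k) _)
          (fun a b => lift_le_one dist (vlam_le_one δ dist T (le_of_lt h0k) h1k) _)
      calc vlam δ dist T (lamseq k) q
          = lamseq k * valGF (fun a b => lift dist (vlam δ dist T (lamseq k)) (δ q a b)) :=
            heq.symm
        _ ≤ 1 * valGF (fun a b => lift dist (vlam δ dist T (lamseq k)) (δ q a b)) := by
            nlinarith
        _ = valGF (fun a b => lift dist (vlam δ dist T (lamseq k)) (δ q a b)) := one_mul _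
        _ ≤ valGF (fun a b => lift dist (wstar δ dist T) (δ q a b)) := hval

lemma wstar_eq_m (hm : IsLfpDelta δ dist T m) : wstar δ dist T = m := by
  funext q
  exact le_antisymm (wstar_le_m δ dist T m hm q)
    (hm.2.2 (wstar δ dist T)
      (fun x => ⟨wstar_nonneg δ dist T x, wstar_le_one δ dist T x⟩)
      (wstar_fix δ dist T) q)

/-- For every ε there is a discount factor whose value is ε-close to m. -/
lemma exists_vlam_close (hm : IsLfpDelta δ dist T m) {ε : ℝ} (hε : 0 < ε) :
    ∃ lam : ℝ, 0 < lam ∧ lam < 1 ∧ ∀ q, m q - ε ≤ vlam δ dist T lam q := by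
  obtain ⟨k, _, hk⟩ := wstar_unif δ dist T hε
  refine ⟨lamseq k, lamseq_pos k, lamseq_lt_one k, fun q => ?_⟩
  have := hk q
  rw [wstar_eq_m δ dist T m hm] at this
  exact this

end Dev4
end CRG
namespace CRG
section Dev5
set_option linter.unusedSectionVars false
set_option maxHeartbeats 1000000
variable {A B Q D : Type} [Fintype A] [Fintype B] [Fintype Q] [Fintype D]
variable [Nonempty A] [Nonempty B] [Nonempty Q] [Nonempty D] [DecidableEq Q]
variable (δ : Q → A → B → D) (dist : D → FDist Q) (T : Q) (m : Q → ℝ)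

lemma natS_mono {S S' : Set Q} (h : S ⊆ S') : natS dist S ⊆ natS dist S' := by
  rintro d ⟨q, hq, hd⟩
  exact ⟨q, h hq, hd⟩

lemma Prog_mono {q : Q} {Gd Gd' : Set Q} (h : Gd ⊆ Gd') :
    Prog δ dist m q Gd ⊆ Prog δ dist m q Gd' := by
  rintro σ ⟨h1, h2⟩
  refine ⟨h1, fun b hb => ?_⟩
  obtain ⟨a, ha, hd⟩ := h2 b hb
  exact ⟨a, ha, natS_mono dist h hd⟩

lemma Risk_mono {q : Q} {Bd Bd' : Set Q} (h : Bd ⊆ Bd') :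
    Risk δ dist m q Bd ⊆ Risk δ dist m q Bd' := by
  rintro σ ⟨h1, b, hb, a, ha, hd⟩
  exact ⟨h1, b, hb, a, ha, natS_mono dist h hd⟩

lemma Eff_mono {q : Q} {Gd Gd' Bd Bd' : Set Q} (hG : Gd ⊆ Gd') (hB : Bd' ⊆ Bd) :
    Eff δ dist m q Gd Bd ⊆ Eff δ dist m q Gd' Bd' := by
  rintro σ ⟨h1, h2⟩
  exact ⟨Prog_mono δ dist m hG h1, fun hr => h2 (Risk_mono δ dist m hB hr)⟩

lemma SecN_mono_n {Bd : Set Q} (n : ℕ) : SecN δ dist m T Bd n ⊆ SecN δ dist m T Bd (n+1) :=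
  Set.subset_union_left

lemma SecN_mono {Bd : Set Q} {n n' : ℕ} (h : n ≤ n') :
    SecN δ dist m T Bd n ⊆ SecN δ dist m T Bd n' := by
  induction h with
  | refl => exact le_refl _
  | step _ ih => exact ih.trans (SecN_mono_n δ dist T m _)

lemma T_mem_SecN {Bd : Set Q} (n : ℕ) : T ∈ SecN δ dist m T Bd n :=
  SecN_mono δ dist T m (Nat.zero_le n) rfl

lemma SecN_anti {Bd Bd' : Set Q} (h : Bd ⊆ Bd') (n : ℕ) :
    SecN δ dist m T Bd' n ⊆ SecN δ dist m T Bd n := by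
  induction n with
  | zero => exact le_refl _
  | succ n ih =>
    rintro q (hq | ⟨hq1, σ, hσ⟩)
    · exact Set.subset_union_left (ih hq)
    · right
      exact ⟨fun hb => hq1 (h hb), σ, Eff_mono δ dist m ih h hσ⟩

lemma Sec_anti {Bd Bd' : Set Q} (h : Bd ⊆ Bd') :
    Sec δ dist m T Bd' ⊆ Sec δ dist m T Bd := by
  rintro q (hq | hq)
  · obtain ⟨s, ⟨n, rfl⟩, hn⟩ := hq
    exact Set.subset_union_left (Set.mem_iUnion.2 ⟨n, SecN_anti δ dist T m h n hn⟩)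
  · exact Set.subset_union_right hq

lemma BadN_mono (n : ℕ) : BadN δ dist m T n ⊆ BadN δ dist m T (n+1) := by
  induction n with
  | zero => exact Set.empty_subset _
  | succ n ih =>
    show (Sec δ dist m T (BadN δ dist m T n))ᶜ ⊆ (Sec δ dist m T (BadN δ dist m T (n+1)))ᶜ
    exact Set.compl_subset_compl.2 (Sec_anti δ dist T m ih)

/-- Generic stabilization of monotone deterministic sequences of subsets. -/
lemma stabilize {f : ℕ → Set Q} (hmono : ∀ n, f n ⊆ f (n+1))
    (hstep : ∀ n, f n = f (n+1) → f (n+1) = f (n+2)) :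
    f (Fintype.card Q) = f (Fintype.card Q + 1) ∧
      ∀ n, f n ⊆ f (Fintype.card Q) := by
  have hmono' : ∀ {i j}, i ≤ j → f i ⊆ f j := by
    intro i j hij
    induction hij with
    | refl => exact le_refl _
    | step _ ih => exact ih.trans (hmono _)
  have hgrow : ∀ j, (∀ i, i < j → f i ≠ f (i+1)) → j ≤ (f j).ncard := by
    intro j
    induction j with
    | zero => intro _; exact Nat.zero_le _
    | succ j ih =>
      intro hne
      have h1 : j ≤ (f j).ncard := ih fun i hi => hne i (Nat.lt_succ_of_lt hi)
      have h2 : f j ⊂ f (j+1) := ssubset_of_subset_of_ne (hmono j) (hne j (Nat.lt_succ_self j))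
      have := Set.ncard_lt_ncard h2 (Set.toFinite _)
      omega
    -- end
  have hex : ∃ j, j ≤ Fintype.card Q ∧ f j = f (j+1) := by
    by_contra hc
    push_neg at hc
    have := hgrow (Fintype.card Q + 1) (by
      intro i hi
      exact hc i (by omega))
    have hcard : (f (Fintype.card Q + 1)).ncard ≤ Fintype.card Q := by
      have h1 := Set.ncard_le_ncard (Set.subset_univ (f (Fintype.card Q + 1))) (Set.toFinite _)
      rwa [Set.ncard_univ, Nat.card_eq_fintype_card] at h1
    omega
  obtain ⟨j, hj, hfj⟩ := hex
  have hstab : ∀ i, j ≤ i → f i = f (i+1) := by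
    intro i hi
    induction hi with
    | refl => exact hfj
    | step h ih => exact hstep _ ih
  have hstab' : ∀ i, Fintype.card Q ≤ i → f (Fintype.card Q) = f i := by
    intro i hi
    induction hi with
    | refl => rfl
    | step h ih => exact ih.trans (hstab _ (le_trans hj h))
  constructor
  · exact hstab' (Fintype.card Q + 1) (by omega)
  · intro n
    rcases le_total n (Fintype.card Q) with h | h
    · exact hmono' h
    · rw [hstab' n h]

/-- Stabilization of the `Bad` sequence : `Bad` is a fixed point. -/
lemma Bad_stable : Sec δ dist m T (Bad δ dist m T) = (Bad δ dist m T)ᶜ := by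
  have := stabilize (f := BadN δ dist m T) (BadN_mono δ dist T m)
    (fun n h => by
      show (Sec δ dist m T (BadN δ dist m T n))ᶜ = (Sec δ dist m T (BadN δ dist m T (n+1)))ᶜ
      rw [h])
  have key : Bad δ dist m T = (Sec δ dist m T (Bad δ dist m T))ᶜ := by
    conv_lhs => rw [Bad, this.1]
    rfl
  conv_rhs => rw [key]
  rw [compl_compl]

lemma mem_Bad_iff {q : Q} : q ∈ Bad δ dist m T ↔ q ∉ Sec δ dist m T (Bad δ dist m T) := by
  rw [Bad_stable δ dist T m]
  simp

/-- The union of the `SecN` sets is reached at index `card Q`. -/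
lemma SecN_stable (Bd : Set Q) :
    (⋃ n, SecN δ dist m T Bd n) = SecN δ dist m T Bd (Fintype.card Q) := by
  have := stabilize (f := SecN δ dist m T Bd) (fun n => SecN_mono_n δ dist T m n)
    (fun n h => by
      have h2 : SecN δ dist m T Bd (n+2) = SecN δ dist m T Bd (n+1)
          ∪ {q | q ∉ Bd ∧ (Eff δ dist m q (SecN δ dist m T Bd (n+1)) Bd).Nonempty} := rfl
      rw [h2]
      conv_rhs => rw [← h]
      rfl)
  apply le_antisymm
  · exact Set.iUnion_subset this.2
  · exact Set.subset_iUnion (fun n => SecN δ dist m T Bd n) (Fintype.card Q)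

lemma m_pos_of_Bad {q : Q} (hq : q ∈ Bad δ dist m T) : m q ≠ 0 := by
  intro h0
  rw [mem_Bad_iff δ dist T m] at hq
  exact hq (Set.subset_union_right h0)

lemma m_pos_of_BadN {n : ℕ} {q : Q} (hq : q ∈ BadN δ dist m T (n+1)) : m q ≠ 0 := by
  intro h0
  exact hq (Set.subset_union_right h0)

lemma T_not_mem_BadN (n : ℕ) : T ∉ BadN δ dist m T n := by
  cases n with
  | zero => exact fun h => h
  | succ n =>
    intro h
    exact h (Set.subset_union_left (Set.mem_iUnion.2 ⟨0, rfl⟩))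

end Dev5
end CRG
namespace CRG
section Dev6a
set_option linter.unusedSectionVars false
set_option maxHeartbeats 1000000
variable {A B Q D : Type} [Fintype A] [Fintype B] [Fintype Q] [Fintype D]
variable [Nonempty A] [Nonempty B] [Nonempty Q] [Nonempty D] [DecidableEq Q]
variable (δ : Q → A → B → D) (dist : D → FDist Q) (T : Q) (m : Q → ℝ)

lemma residual_ofPos {X : Type} [Fintype X] (s : Q → FDist X) (π : List Q) :
    residual (ofPos s) π = ofPos s := rfl

lemma residual_nil {X : Type} [Fintype X] (s : Strat Q X) : residual s [] = s := rfl

lemma residual_append {X : Type} [Fintype X] (s : Strat Q X) (π π' : List Q) :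
    residual (residual s π) π' = residual s (π ++ π') := by
  funext h q
  unfold residual
  rw [List.append_assoc]

lemma valA_T (sA : Strat Q A) : valA δ dist T sA T = 1 := by
  apply le_antisymm (valA_le_one δ dist T sA T)
  apply le_valA
  intro sB
  rw [reach_T]

lemma sum_mul_sub (c x : Q → ℝ) (d : ℝ) (hc : ∑ q, c q = 1) :
    ∑ q, c q * (x q - d) = (∑ q, c q * x q) - d := by
  have h : ∀ q, c q * (x q - d) = c q * x q - c q * d := fun q => by ring
  rw [Finset.sum_congr rfl fun q _ => h q, Finset.sum_sub_distrib, ← Finset.sum_mul, hc,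
    one_mul]

/-- One-step Bellman inequality for a positional strategy : there is a minimizing
action of Player B whose one-step value bounds `valA` from below. -/
lemma bellman_ge (habs : Absorbing δ dist T) (σ : Q → FDist A) {q : Q} (hq : q ≠ T) :
    ∃ b : B,
      (∀ b' : B, ∑ q', step δ dist (σ q) (dirac b) q q' * valA δ dist T (ofPos σ) q'
        ≤ ∑ q', step δ dist (σ q) (dirac b') q q' * valA δ dist T (ofPos σ) q') ∧
      ∑ q', step δ dist (σ q) (dirac b) q q' * valA δ dist T (ofPos σ) q'
        ≤ valA δ dist T (ofPos σ) q := by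
  obtain ⟨b, _, hb⟩ := Finset.exists_min_image Finset.univ
    (fun b => ∑ q', step δ dist (σ q) (dirac b) q q' * valA δ dist T (ofPos σ) q')
    Finset.univ_nonempty
  refine ⟨b, fun b' => hb b' (Finset.mem_univ b'), ?_⟩
  apply le_valA
  intro sB
  rw [reach_decomp δ dist T habs (ofPos σ) sB q, residual_ofPos]
  calc ∑ q', step δ dist (σ q) (dirac b) q q' * valA δ dist T (ofPos σ) q'
      = ∑ b', (sB [] q).1 b' *
          ∑ q', step δ dist (σ q) (dirac b) q q' * valA δ dist T (ofPos σ) q' := by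
        rw [← Finset.sum_mul, fd_sum, one_mul]
    _ ≤ ∑ b', (sB [] q).1 b' *
          ∑ q', step δ dist (σ q) (dirac b') q q' * valA δ dist T (ofPos σ) q' :=
        Finset.sum_le_sum fun b' _ =>
          mul_le_mul_of_nonneg_left (hb b' (Finset.mem_univ b')) (fd_nonneg _ _)
    _ ≤ ∑ b', (sB [] q).1 b' *
          ∑ q', step δ dist (σ q) (dirac b') q q' *
            reach δ dist T (ofPos σ) (residual sB [q]) q' := by
        apply Finset.sum_le_sum
        intro b' _
        apply mul_le_mul_of_nonneg_left _ (fd_nonneg _ _)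
        apply Finset.sum_le_sum
        intro q' _
        exact mul_le_mul_of_nonneg_left (valA_le_reach δ dist T (ofPos σ) (residual sB [q]) q')
          (step_nonneg δ dist _ _ _ _)
    _ = ∑ q', step δ dist (σ q) (sB [] q) q q' *
          reach δ dist T (ofPos σ) (residual sB [q]) q' :=
        (step_mix δ dist (σ q) (sB [] q) q _).symm

/-- The states of positive rank in `SecN` admit efficient strategies. -/
lemma eff_of_mem_S (Bd : Set Q) {q : Q}
    (hq : q ∈ SecN δ dist m T Bd (Fintype.card Q)) (hqT : q ≠ T) :
    ∃ n : ℕ, q ∉ SecN δ dist m T Bd n ∧ q ∉ Bd ∧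
      (Eff δ dist m q (SecN δ dist m T Bd n) Bd).Nonempty := by
  have hex : ∃ n, q ∈ SecN δ dist m T Bd n := ⟨_, hq⟩
  set n0 := Nat.find hex with hn0
  have hspec : q ∈ SecN δ dist m T Bd n0 := Nat.find_spec hex
  have hn0pos : n0 ≠ 0 := by
    intro h
    rw [h] at hspec
    exact hqT hspec
  obtain ⟨k, hk⟩ : ∃ k, n0 = k + 1 := ⟨n0 - 1, by omega⟩
  refine ⟨k, ?_, ?_, ?_⟩
  · exact Nat.find_min hex (by omega)
  all_goals {
    rw [hk] at hspec
    rcases hspec with h | h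
    · exact absurd h (Nat.find_min hex (by omega))
    · first
      | exact h.1
      | exact h.2
  }

end Dev6a
end CRG
namespace CRG
section Dev6b
set_option linter.unusedSectionVars false
set_option maxHeartbeats 4000000
variable {A B Q D : Type} [Fintype A] [Fintype B] [Fintype Q] [Fintype D]
variable [Nonempty A] [Nonempty B] [Nonempty Q] [Nonempty D] [DecidableEq Q]
variable (δ : Q → A → B → D) (dist : D → FDist Q) (T : Q) (m : Q → ℝ)

/-- The main construction : an ε-optimal positional strategy that is optimal outside Bad. -/
lemma exists_good_positional (habs : Absorbing δ dist T) (hm : IsLfpDelta δ dist T m)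
    {ε : ℝ} (hε : 0 < ε) :
    ∃ sA : Q → FDist A,
      (∀ q, m q - ε ≤ valA δ dist T (ofPos sA) q) ∧
      (∀ q, q ∉ Bad δ dist m T → m q ≤ valA δ dist T (ofPos sA) q) := by
  classical
  set Bd := Bad δ dist m T with hBd
  set S := SecN δ dist m T Bd (Fintype.card Q) with hSdef
  have hSsub : ∀ n, SecN δ dist m T Bd n ⊆ S := by
    intro n
    rw [hSdef, ← SecN_stable δ dist T m Bd]
    exact Set.subset_iUnion (fun n => SecN δ dist m T Bd n) n
  have hSBd : ∀ q ∈ S, q ∉ Bd := by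
    intro q hq
    rw [hBd, mem_Bad_iff δ dist T m]
    intro hn
    exact hn (Set.subset_union_left (Set.mem_iUnion.2 ⟨Fintype.card Q, hq⟩))
  -- efficient selections with levels
  have hsel0 : ∀ q : Q, ∃ p : ℕ × FDist A, (q ∈ S ∧ q ≠ T) →
      (q ∉ SecN δ dist m T Bd p.1 ∧ q ∉ Bd ∧
        p.2 ∈ Eff δ dist m q (SecN δ dist m T Bd p.1) Bd) := by
    intro q
    by_cases h : q ∈ S ∧ q ≠ T
    · obtain ⟨n, hn1, hn2, σ, hσ⟩ := eff_of_mem_S δ dist T m Bd h.1 h.2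
      exact ⟨(n, σ), fun _ => ⟨hn1, hn2, hσ⟩⟩
    · exact ⟨(0, Classical.arbitrary _), fun h' => absurd h' h⟩
  choose psel hpsel using hsel0
  set lvl : Q → ℕ := fun q => (psel q).1 with hlvl
  set σF : Q → FDist A := fun q => (psel q).2 with hσF
  -- the minimal positive optimality gap
  set Pb : Finset (Q × B) := Finset.univ.filter (fun p =>
    outB (locPay δ dist m p.1) (σF p.1) p.2 ≠ valStratGF (locPay δ dist m p.1) (σF p.1))
    with hPb
  set dmin : ℝ := if hP : Pb.Nonempty then
      Pb.inf' hP (fun p => outB (locPay δ dist m p.1) (σF p.1) p.2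
        - valStratGF (locPay δ dist m p.1) (σF p.1)) else 1 with hdmin
  have hdminpos : 0 < dmin := by
    rw [hdmin]
    split
    · rename_i hP
      obtain ⟨p, hp, hpeq⟩ := Finset.exists_mem_eq_inf' hP (fun p =>
        outB (locPay δ dist m p.1) (σF p.1) p.2
          - valStratGF (locPay δ dist m p.1) (σF p.1))
      rw [hpeq]
      rw [hPb, Finset.mem_filter] at hp
      have hle := valStratGF_le_outB (locPay δ dist m p.1) (σF p.1) p.2
      have := hp.2
      rw [sub_pos]
      exact lt_of_le_of_ne hle (Ne.symm this)
    · norm_num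
  have hdminle : ∀ q b, outB (locPay δ dist m q) (σF q) b
      ≠ valStratGF (locPay δ dist m q) (σF q) →
      dmin ≤ outB (locPay δ dist m q) (σF q) b - valStratGF (locPay δ dist m q) (σF q) := by
    intro q b hne
    have hmem : (q, b) ∈ Pb := by
      rw [hPb, Finset.mem_filter]
      exact ⟨Finset.mem_univ _, hne⟩
    rw [hdmin, dif_pos ⟨(q, b), hmem⟩]
    exact Finset.inf'_le _ hmem
  -- parameters
  set ε' : ℝ := (min ε dmin) / 2 with hε'
  have hε'pos : 0 < ε' := by
    rw [hε']
    have := lt_min hε hdminpos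
    linarith
  have hε'ε : ε' ≤ ε := by
    rw [hε']
    have h := min_le_left ε dmin
    linarith
  have hε'δ : ε' < dmin := by
    rw [hε']
    have := min_le_right ε dmin
    linarith
  obtain ⟨lam, hlam0, hlam1, hvc⟩ := exists_vlam_close δ dist T m hm hε'pos
  set v : Q → ℝ := vlam δ dist T lam with hv
  have hv0 : ∀ q, 0 ≤ v q := vlam_nonneg δ dist T (le_of_lt hlam0) (le_of_lt hlam1)
  have hv1 : ∀ q, v q ≤ 1 := vlam_le_one δ dist T (le_of_lt hlam0) (le_of_lt hlam1)
  have hvm : ∀ q, v q ≤ m q := vlam_le_m δ dist T m hm (le_of_lt hlam0) (le_of_lt hlam1)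
  -- the minimal positive discounted value
  set Pv : Finset Q := Finset.univ.filter (fun q => 0 < v q) with hPv
  set mu : ℝ := if hP : Pv.Nonempty then Pv.inf' hP v else 1 with hmu
  have hmupos : 0 < mu := by
    rw [hmu]
    split
    · rename_i hP
      obtain ⟨p, hp, hpeq⟩ := Finset.exists_mem_eq_inf' hP v
      rw [hpeq]
      rw [hPv, Finset.mem_filter] at hp
      exact hp.2
    · norm_num
  have hmule : ∀ q, 0 < v q → mu ≤ v q := by
    intro q h
    have hmem : q ∈ Pv := by
      rw [hPv, Finset.mem_filter]
      exact ⟨Finset.mem_univ _, h⟩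
    rw [hmu, dif_pos ⟨q, hmem⟩]
    exact Finset.inf'_le _ hmem
  set e : ℝ := (1 - lam)/lam * mu / 2 with he
  have hepos : 0 < e := by
    rw [he]
    have h1 : 0 < (1 - lam)/lam := div_pos (by linarith) hlam0
    positivity
  have hD : ∀ q : Q, ∃ σA : FDist A,
      valGF (fun a b => lift dist v (δ q a b)) - e
        < valStratGF (fun a b => lift dist v (δ q a b)) σA :=
    fun q => exists_valStratGF_gt _ hepos
  choose σD hσD using hD
  set σsel : Q → FDist A := fun q => if q ∈ S then σF q else σD q with hσsel
  set w : Q → ℝ := fun q => if q ∈ Bd then v q else m q with hw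
  set f : Q → ℝ := valA δ dist T (ofPos σsel) with hf
  have hf0 : ∀ q, 0 ≤ f q := fun q => valA_nonneg δ dist T _ q
  have hfT : f T = 1 := valA_T δ dist T _
  have hTBd : T ∉ Bd := T_not_mem_BadN δ dist T m _
  have hwT : w T = 1 := by
    simp only [hw, if_neg hTBd]
    exact m_T δ dist T m hm
  have hwm_le : ∀ q, w q ≤ m q := by
    intro q
    simp only [hw]
    split
    · exact hvm q
    · exact le_refl _
  have hwm_ge : ∀ q, m q - ε' ≤ w q := by
    intro q
    simp only [hw]
    split
    · exact hvc q
    · linarith [hε'pos]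
  have hvw : ∀ q, v q ≤ w q := by
    intro q
    simp only [hw]
    split
    · exact le_refl _
    · exact hvm q
  -- the main claim
  have claim : ∀ q, w q ≤ f q := by
    by_contra hc
    push_neg at hc
    obtain ⟨qb, hqb⟩ := hc
    obtain ⟨qmax, _, hqmax⟩ := Finset.exists_max_image Finset.univ (fun q => w q - f q)
      Finset.univ_nonempty
    set d : ℝ := w qmax - f qmax with hd
    have hdpos : 0 < d := by
      have := hqmax qb (Finset.mem_univ qb)
      rw [hd]
      linarith
    have hpw : ∀ q, w q - d ≤ f q := by
      intro q
      have := hqmax q (Finset.mem_univ q)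
      rw [hd]
      linarith
    set Zs : Finset Q := Finset.univ.filter (fun q => w q - f q = d) with hZs
    have hZne : Zs.Nonempty := ⟨qmax, by
      rw [hZs, Finset.mem_filter]
      exact ⟨Finset.mem_univ _, rfl⟩⟩
    obtain ⟨q0, hq0Z, hq0min⟩ := Finset.exists_min_image Zs lvl hZne
    rw [hZs, Finset.mem_filter] at hq0Z
    have hq0 : w q0 - f q0 = d := hq0Z.2
    have hq0T : q0 ≠ T := by
      intro h
      rw [h, hwT, hfT] at hq0
      rw [← hq0] at hdpos
      norm_num at hdpos
    obtain ⟨bs, hbmin, hble⟩ := bellman_ge δ dist T habs σsel hq0T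
    have hsum1 : ∑ q', step δ dist (σsel q0) (dirac bs) q0 q' = 1 :=
      step_sum_one δ dist _ _ _
    -- the key inequality : the expected w after bs is at most w q0
    have key1 : ∑ q', step δ dist (σsel q0) (dirac bs) q0 q' * w q' ≤ w q0 := by
      have h1 : ∑ q', step δ dist (σsel q0) (dirac bs) q0 q' * (w q' - d)
          ≤ ∑ q', step δ dist (σsel q0) (dirac bs) q0 q' * f q' :=
        Finset.sum_le_sum fun q' _ =>
          mul_le_mul_of_nonneg_left (hpw q') (step_nonneg δ dist _ _ _ _)
      rw [sum_mul_sub _ _ _ hsum1] at h1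
      have h2 := hble
      linarith [hq0]
    -- case analysis on q0
    by_cases hq0Bd : q0 ∈ Bd
    · -- q0 is a Bad state : the discounted strategy strictly gains
      have hq0S : q0 ∉ S := fun h => hSBd q0 h hq0Bd
      have hsq : σsel q0 = σD q0 := by
        rw [hσsel]
        simp only [if_neg hq0S]
      have hwq0 : w q0 = v q0 := by
        simp only [hw, if_pos hq0Bd]
      have hv0q : 0 < v q0 := by
        rw [← hwq0]
        have := hf0 q0
        linarith [hq0, hdpos]
      have hvalGF : valGF (fun a b => lift dist v (δ q0 a b)) = v q0 / lam := by
        rw [eq_div_iff (ne_of_gt hlam0)]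
        have := vlam_eq δ dist T hlam0 hlam1 hq0T
        rw [← hv] at this
        linarith
      have hchain : v q0 + e ≤ ∑ q', step δ dist (σsel q0) (dirac bs) q0 q' * w q' := by
        have h1 : ∑ q', step δ dist (σsel q0) (dirac bs) q0 q' * v q'
            ≤ ∑ q', step δ dist (σsel q0) (dirac bs) q0 q' * w q' :=
          Finset.sum_le_sum fun q' _ =>
            mul_le_mul_of_nonneg_left (hvw q') (step_nonneg δ dist _ _ _ _)
        have h2 : ∑ q', step δ dist (σsel q0) (dirac bs) q0 q' * v q'
            = outB (fun a b => lift dist v (δ q0 a b)) (σD q0) bs := by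
          rw [hsq]
          exact sum_step_dirac_mul δ dist _ _ _ _
        have h3 := valStratGF_le_outB (fun a b => lift dist v (δ q0 a b)) (σD q0) bs
        have h4 := hσD q0
        have h5 : v q0 / lam - v q0 = v q0 * ((1 - lam)/lam) := by
          field_simp
        have h6 : mu * ((1-lam)/lam) ≤ v q0 * ((1-lam)/lam) := by
          apply mul_le_mul_of_nonneg_right (hmule q0 hv0q)
          apply div_nonneg (by linarith) (le_of_lt hlam0)
        have h7 : mu * ((1-lam)/lam) = 2 * e := by
          rw [he]
          ring
        rw [hvalGF] at h4
        linarith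
      rw [hwq0] at key1
      linarith [hepos]
    · -- q0 is not Bad
      have hwq0 : w q0 = m q0 := by
        simp only [hw, if_neg hq0Bd]
      by_cases hm0 : m q0 = 0
      · rw [hwq0, hm0] at hq0
        have := hf0 q0
        linarith
      · -- q0 ∈ S : the efficient strategy
        have hq0Sec : q0 ∈ Sec δ dist m T Bd := by
          rw [hBd] at hq0Bd ⊢
          by_contra hn
          exact hq0Bd ((mem_Bad_iff δ dist T m).2 hn)
        have hq0S : q0 ∈ S := by
          rcases hq0Sec with h | h
          · rw [hSdef, ← SecN_stable δ dist T m Bd]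
            exact h
          · exact absurd h hm0
        have hsq : σsel q0 = σF q0 := by
          rw [hσsel]
          simp only [if_pos hq0S]
        obtain ⟨hlvl1, hlvl2, hEff⟩ := hpsel q0 ⟨hq0S, hq0T⟩
        have hOpt : σF q0 ∈ OptA (locPay δ dist m q0) := hEff.1.1
        have hvalstrat : valStratGF (locPay δ dist m q0) (σF q0) = m q0 := by
          rw [hOpt]
          exact m_fix δ dist T m hm hq0T
        by_cases hbopt : outB (locPay δ dist m q0) (σF q0) bs
            = valStratGF (locPay δ dist m q0) (σF q0)
        · -- the minimizing action is an optimal response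
          have hnoBd : ∀ q', step δ dist (σF q0) (dirac bs) q0 q' ≠ 0 → q' ∉ Bd := by
            intro q' hstep hq'Bd
            obtain ⟨a, ha, hdista⟩ := step_dirac_ne_zero δ dist hstep
            exact hEff.2 ⟨hOpt, bs, hbopt, a, ha, ⟨q', hq'Bd, hdista⟩⟩
          have hw_eq : ∑ q', step δ dist (σsel q0) (dirac bs) q0 q' * w q'
              = ∑ q', step δ dist (σsel q0) (dirac bs) q0 q' * m q' := by
            apply Finset.sum_congr rfl
            intro q' _
            by_cases hz : step δ dist (σsel q0) (dirac bs) q0 q' = 0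
            · rw [hz, zero_mul, zero_mul]
            · rw [hsq] at hz
              have hnb := hnoBd q' hz
              simp only [hw, if_neg hnb]
          have hsum_m : ∑ q', step δ dist (σsel q0) (dirac bs) q0 q' * m q' = m q0 := by
            rw [hsq, sum_step_dirac_mul δ dist _ _ _ _]
            show outB (locPay δ dist m q0) (σF q0) bs = m q0
            rw [hbopt, hvalstrat]
          -- equality propagation
          have heq1 : ∑ q', step δ dist (σsel q0) (dirac bs) q0 q' * (w q' - d)
              = ∑ q', step δ dist (σsel q0) (dirac bs) q0 q' * f q' := by
            apply le_antisymm
            · exact Finset.sum_le_sum fun q' _ =>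
                mul_le_mul_of_nonneg_left (hpw q') (step_nonneg δ dist _ _ _ _)
            · rw [sum_mul_sub _ _ _ hsum1, hw_eq, hsum_m, ← hwq0]
              linarith [hble, hq0]
          have heqterm := (Finset.sum_eq_sum_iff_of_le (fun q' _ =>
            mul_le_mul_of_nonneg_left (hpw q') (step_nonneg δ dist (σsel q0) (dirac bs) q0 q'))).1 heq1
          -- progress : a successor of lower level lies in Zs
          obtain ⟨a, ha, hnat⟩ := hEff.1.2 bs hbopt
          obtain ⟨q'', hq''S, hq''dist⟩ := hnat
          have hstep'' : step δ dist (σF q0) (dirac bs) q0 q'' ≠ 0 :=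
            step_dirac_pos_of δ dist ha hq''dist
          have hfq'' : w q'' - d = f q'' := by
            have := heqterm q'' (Finset.mem_univ q'')
            rw [hsq] at this
            exact mul_left_cancel₀ hstep'' this
          have hq''T : q'' ≠ T := by
            intro h
            rw [h, hwT, hfT] at hfq''
            linarith [hdpos]
          have hq''Z : q'' ∈ Zs := by
            rw [hZs, Finset.mem_filter]
            exact ⟨Finset.mem_univ _, by linarith [hfq'']⟩
          have hq''Smem : q'' ∈ S := hSsub (lvl q0) hq''S
          obtain ⟨hq''lvl, _, _⟩ := hpsel q'' ⟨hq''Smem, hq''T⟩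
          have hlt : lvl q'' < lvl q0 := by
            by_contra hge
            push_neg at hge
            exact hq''lvl (SecN_mono δ dist T m hge hq''S)
          exact absurd (hq0min q'' hq''Z) (by omega)
        · -- the minimizing action is not an optimal response : strict gain
          have hδ := hdminle q0 bs hbopt
          have hsum_m : ∑ q', step δ dist (σsel q0) (dirac bs) q0 q' * m q'
              = outB (locPay δ dist m q0) (σF q0) bs := by
            rw [hsq]
            exact sum_step_dirac_mul δ dist _ _ _ _
          have h1 : ∑ q', step δ dist (σsel q0) (dirac bs) q0 q' * (m q' - ε')
              ≤ ∑ q', step δ dist (σsel q0) (dirac bs) q0 q' * w q' :=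
            Finset.sum_le_sum fun q' _ =>
              mul_le_mul_of_nonneg_left (hwm_ge q') (step_nonneg δ dist _ _ _ _)
          rw [sum_mul_sub _ _ _ hsum1, hsum_m] at h1
          rw [hvalstrat] at hδ
          rw [hwq0] at key1
          linarith
  -- conclusion
  refine ⟨σsel, fun q => ?_, fun q hq => ?_⟩
  · have h1 := claim q
    have h2 := hwm_ge q
    show m q - ε ≤ f q
    linarith
  · have h1 := claim q
    show m q ≤ f q
    simp only [hw, if_neg hq] at h1
    exact h1
end Dev6b
end CRG
namespace CRG
section Dev7a
set_option linter.unusedSectionVars false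
set_option maxHeartbeats 4000000
variable {A B Q D : Type} [Fintype A] [Fintype B] [Fintype Q] [Fintype D]
variable [Nonempty A] [Nonempty B] [Nonempty Q] [Nonempty D] [DecidableEq Q]

/-- Histories reachable with positive probability under a pair of strategies. -/
inductive RelHist (δ : Q → A → B → D) (dist : D → FDist Q) (sA : Strat Q A)
    (sB : Strat Q B) (q₀ : Q) : List Q → Q → Prop
  | base : RelHist δ dist sA sB q₀ [] q₀
  | step {h : List Q} {q q' : Q} :
      RelHist δ dist sA sB q₀ h q →
      step δ dist (sA h q) (sB h q) q q' ≠ 0 →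
      RelHist δ dist sA sB q₀ (h ++ [q]) q'

variable (δ : Q → A → B → D) (dist : D → FDist Q) (T : Q) (m : Q → ℝ)

/-- If no relevant history reaches the target, the reach probability is zero. -/
lemma reach_zero (sA : Strat Q A) (sB : Strat Q B) (q0 : Q)
    (hP : ∀ h q, RelHist δ dist sA sB q0 h q → q ≠ T) :
    reach δ dist T sA sB q0 = 0 := by
  have haux : ∀ n h q, RelHist δ dist sA sB q0 h q →
      reachSetNAux δ dist {T} n sA sB h q = 0 := by
    intro n
    induction n with
    | zero =>
      intro h q hrel
      rw [aux_zero, if_neg (hP h q hrel)]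
    | succ n ih =>
      intro h q hrel
      rw [aux_succ, if_neg (hP h q hrel)]
      apply Finset.sum_eq_zero
      intro q' _
      by_cases hz : step δ dist (sA h q) (sB h q) q q' = 0
      · rw [hz, zero_mul]
      · rw [ih _ _ (RelHist.step hrel hz), mul_zero]
  apply le_antisymm
  · apply reach_le
    intro n
    rw [reachN_eq, haux n [] q0 RelHist.base]
  · exact reach_nonneg δ dist T sA sB q0

/-- Key lemma : residual optimality propagates along positive steps, provided
Player B plays safely at the current node. -/
lemma resid_opt_step (habs : Absorbing δ dist T) (hm : IsLfpDelta δ dist T m)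
    (sA : Strat Q A) (sB : Strat Q B) {h : List Q} {q q' : Q} (hq : q ≠ T)
    (hsafeq : ∑ x, step δ dist (sA h q) (sB h q) q x * m x ≤ m q)
    (hval : m q ≤ valA δ dist T (residual sA h) q)
    (hstep : step δ dist (sA h q) (sB h q) q q' ≠ 0) :
    m q' ≤ valA δ dist T (residual sA (h ++ [q])) q' := by
  by_contra hlt
  push_neg at hlt
  obtain ⟨sB1, hsB1⟩ : ∃ sB1 : Strat Q B,
      reach δ dist T (residual sA (h ++ [q])) sB1 q' < m q' :=
    exists_lt_of_ciInf_lt hlt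
  set R : Strat Q A := residual sA h with hR
  set g : Strat Q B := fun t x => if t.headD x = q' then sB1 t x
    else greedyB δ dist m (residual sA (h ++ [q])) t x with hg
  set sB2 : Strat Q B := fun h' x => match h' with
    | [] => sB h x
    | _ :: t => g t x with hsB2
  have hR0 : R [] q = sA h q := by
    show sA (h ++ []) q = sA h q
    rw [List.append_nil]
  have hB20 : sB2 [] q = sB h q := rfl
  have hres : residual R [q] = residual sA (h ++ [q]) := residual_append sA h [q]
  have hresB : residual sB2 [q] = g := rfl
  have hdec := reach_decomp δ dist T habs R sB2 q
  rw [hres, hresB, hR0, hB20] at hdec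
  -- bound the branches
  have hbranch : ∀ x, reach δ dist T (residual sA (h ++ [q])) g x
      ≤ m x - (if x = q' then m q' - reach δ dist T (residual sA (h ++ [q])) sB1 q' else 0) := by
    intro x
    by_cases hx : x = q'
    · subst hx
      have hcong : reach δ dist T (residual sA (h ++ [q])) g x
          = reach δ dist T (residual sA (h ++ [q])) sB1 x := by
        apply reach_congrB
        · show (if ([].headD x = x) then sB1 [] x else _) = sB1 [] x
          simp
        · intro t y
          show (if ((x :: t).headD y = x) then sB1 (x :: t) y else _) = sB1 (x :: t) y
          simp
      rw [hcong, if_pos rfl]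
      linarith
    · have hcong : reach δ dist T (residual sA (h ++ [q])) g x
          = reach δ dist T (residual sA (h ++ [q]))
              (greedyB δ dist m (residual sA (h ++ [q]))) x := by
        apply reach_congrB
        · show (if ([].headD x = q') then sB1 [] x else _) = _
          rw [if_neg]
          exact hx
        · intro t y
          show (if ((x :: t).headD y = q') then sB1 (x :: t) y else _) = _
          rw [if_neg]
          exact hx
      rw [hcong, if_neg hx, sub_zero]
      exact reach_greedy_le_m δ dist T m habs hm (residual sA (h ++ [q])) x
  -- combine
  have hcomb : reach δ dist T R sB2 q ≤ m q - step δ dist (sA h q) (sB h q) q q' *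
      (m q' - reach δ dist T (residual sA (h ++ [q])) sB1 q') := by
    rw [hdec]
    have h1 : ∀ x, step δ dist (sA h q) (sB h q) q x *
        reach δ dist T (residual sA (h ++ [q])) g x
        ≤ step δ dist (sA h q) (sB h q) q x * m x
          - (if x = q' then step δ dist (sA h q) (sB h q) q x *
              (m q' - reach δ dist T (residual sA (h ++ [q])) sB1 q') else 0) := by
      intro x
      have hb := hbranch x
      have hs := step_nonneg δ dist (sA h q) (sB h q) q x
      by_cases hx : x = q'
      · rw [if_pos hx]
        rw [if_pos hx] at hb
        have := mul_le_mul_of_nonneg_left hb hs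
        rw [mul_sub] at this
        linarith
      · rw [if_neg hx]
        rw [if_neg hx, sub_zero] at hb
        have := mul_le_mul_of_nonneg_left hb hs
        linarith
    calc ∑ x, step δ dist (sA h q) (sB h q) q x *
          reach δ dist T (residual sA (h ++ [q])) g x
        ≤ ∑ x, (step δ dist (sA h q) (sB h q) q x * m x
          - (if x = q' then step δ dist (sA h q) (sB h q) q x *
              (m q' - reach δ dist T (residual sA (h ++ [q])) sB1 q') else 0)) :=
          Finset.sum_le_sum fun x _ => h1 x
      _ = (∑ x, step δ dist (sA h q) (sB h q) q x * m x)
          - step δ dist (sA h q) (sB h q) q q' *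
            (m q' - reach δ dist T (residual sA (h ++ [q])) sB1 q') := by
          rw [Finset.sum_sub_distrib]
          congr 1
          rw [Finset.sum_ite_eq' Finset.univ q']
          rw [if_pos (Finset.mem_univ q')]
      _ ≤ m q - step δ dist (sA h q) (sB h q) q q' *
            (m q' - reach δ dist T (residual sA (h ++ [q])) sB1 q') := by
          linarith
  have hpos : 0 < step δ dist (sA h q) (sB h q) q q' *
      (m q' - reach δ dist T (residual sA (h ++ [q])) sB1 q') := by
    apply mul_pos
    · exact lt_of_le_of_ne (step_nonneg δ dist _ _ _ _) (Ne.symm hstep)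
    · linarith
  have hvr := valA_le_reach δ dist T R sB2 q
  linarith

/-- Forced local optimality : a strategy with value at least `m q` plays a locally
optimal mixed action at the root. -/
lemma locopt_of_residopt (habs : Absorbing δ dist T) (hm : IsLfpDelta δ dist T m)
    (sA' : Strat Q A) {q : Q} (hq : q ≠ T) (hval : m q ≤ valA δ dist T sA' q) :
    sA' [] q ∈ OptA (locPay δ dist m q) := by
  have hkey : valA δ dist T sA' q ≤ valStratGF (locPay δ dist m q) (sA' [] q) := by
    have hdec := reach_decomp δ dist T habs sA' (greedyB δ dist m sA') q
    have hresg : residual (greedyB δ dist m sA') [q] = greedyB δ dist m (residual sA' [q]) :=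
      rfl
    rw [hresg] at hdec
    have hb : ∀ x, reach δ dist T (residual sA' [q])
        (greedyB δ dist m (residual sA' [q])) x ≤ m x :=
      fun x => reach_greedy_le_m δ dist T m habs hm (residual sA' [q]) x
    have h1 : reach δ dist T sA' (greedyB δ dist m sA') q
        ≤ ∑ x, step δ dist (sA' [] q) (greedyB δ dist m sA' [] q) q x * m x := by
      rw [hdec]
      exact Finset.sum_le_sum fun x _ =>
        mul_le_mul_of_nonneg_left (hb x) (step_nonneg δ dist _ _ _ _)
    have h2 : ∑ x, step δ dist (sA' [] q) (greedyB δ dist m sA' [] q) q x * m x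
        = valStratGF (locPay δ dist m q) (sA' [] q) := by
      show ∑ x, step δ dist (sA' [] q) (dirac _) q x * m x = _
      rw [step_m_outB]
      exact outB_optAct (greedyB_opt δ dist m sA' [] q)
    calc valA δ dist T sA' q ≤ reach δ dist T sA' (greedyB δ dist m sA') q :=
          valA_le_reach δ dist T _ _ q
      _ ≤ _ := by rw [h2] at h1; exact h1
  have hle := valStrat_le_m δ dist T m hm hq (sA' [] q)
  have : valStratGF (locPay δ dist m q) (sA' [] q) = m q := le_antisymm hle (by linarith)
  show valStratGF (locPay δ dist m q) (sA' [] q) = valGF (locPay δ dist m q)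
  rw [this, m_fix δ dist T m hm hq]

end Dev7a
end CRG
namespace CRG
section Dev7b
set_option linter.unusedSectionVars false
set_option maxHeartbeats 4000000
variable {A B Q D : Type} [Fintype A] [Fintype B] [Fintype Q] [Fintype D]
variable [Nonempty A] [Nonempty B] [Nonempty Q] [Nonempty D] [DecidableEq Q]
variable (δ : Q → A → B → D) (dist : D → FDist Q) (T : Q) (m : Q → ℝ)

lemma value_eq_m (habs : Absorbing δ dist T) (hm : IsLfpDelta δ dist T m) (q : Q) :
    value δ dist T q = m q := by
  apply le_antisymm (value_le_m δ dist T m habs hm q)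
  by_contra hlt
  push_neg at hlt
  set ε := (m q - value δ dist T q)/2 with hε
  have hεpos : 0 < ε := by rw [hε]; linarith
  obtain ⟨σsel, h1, _⟩ := exists_good_positional δ dist T m habs hm hεpos
  have h2 := valA_le_value δ dist T (ofPos σsel) q
  have := h1 q
  rw [hε] at this
  linarith

lemma maximizable_of_not_bad (habs : Absorbing δ dist T) (hm : IsLfpDelta δ dist T m)
    {q : Q} (hq : q ∉ Bad δ dist m T) : Maximizable δ dist T q := by
  obtain ⟨σsel, _, h2⟩ := exists_good_positional δ dist T m habs hm (zero_lt_one (α := ℝ))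
  refine ⟨ofPos σsel, le_antisymm (valA_le_value δ dist T _ q) ?_⟩
  rw [value_eq_m δ dist T m habs hm q]
  exact h2 q hq

lemma BadN_succ_eq (n : ℕ) :
    BadN δ dist m T (n+1) = (Sec δ dist m T (BadN δ dist m T n))ᶜ := rfl

/-- The hard direction : from a `BadN` state no strategy achieves value `m`. -/
lemma not_opt_of_BadN (habs : Absorbing δ dist T) (hm : IsLfpDelta δ dist T m) :
    ∀ n, ∀ q0 ∈ BadN δ dist m T n, ∀ sA : Strat Q A, ¬ (m q0 ≤ valA δ dist T sA q0) := by
  intro n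
  induction n with
  | zero => exact fun q0 h _ _ => h
  | succ n IH =>
    intro q0 hq0 sA hval0
    set Bd := BadN δ dist m T n with hBdd
    set Sn := SecN δ dist m T Bd (Fintype.card Q) with hSn
    have hSnsub : ∀ k, SecN δ dist m T Bd k ⊆ Sec δ dist m T Bd := by
      intro k x hx
      exact Set.subset_union_left (Set.mem_iUnion.2 ⟨k, hx⟩)
    have hm0 : m q0 ≠ 0 := m_pos_of_BadN δ dist T m hq0
    -- adversarial optimal responses
    have hwitex : ∀ (σ : FDist A) (q : Q), ∃ b : B, b ∈ optActs (locPay δ dist m q) σ ∧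
        (σ ∈ Risk δ dist m q Bd → ∃ a, σ.1 a ≠ 0 ∧ δ q a b ∈ natS dist Bd) ∧
        (σ ∉ Risk δ dist m q Bd → σ ∈ OptA (locPay δ dist m q) → σ ∉ Prog δ dist m q Sn →
          ∀ a, σ.1 a ≠ 0 → δ q a b ∉ natS dist Sn) := by
      intro σ q
      by_cases h1 : σ ∈ Risk δ dist m q Bd
      · have h1c := h1
        obtain ⟨_, b, hb, a, ha, hd⟩ := h1c
        exact ⟨b, hb, fun _ => ⟨a, ha, hd⟩, fun hno => absurd h1 hno⟩
      · by_cases h2 : σ ∈ OptA (locPay δ dist m q) ∧ σ ∉ Prog δ dist m q Sn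
        · have hnp : ¬ (σ ∈ OptA (locPay δ dist m q) ∧
              ∀ b ∈ optActs (locPay δ dist m q) σ, ∃ a ∈ supp σ, δ q a b ∈ natS dist Sn) :=
            h2.2
          rw [not_and] at hnp
          have hnp2 := hnp h2.1
          push_neg at hnp2
          obtain ⟨b, hb, hall⟩ := hnp2
          exact ⟨b, hb, fun hr => absurd hr h1, fun _ _ _ a ha => hall a ha⟩
        · obtain ⟨b, hb⟩ := exists_optAct (locPay δ dist m q) σ
          exact ⟨b, hb, fun hr => absurd hr h1,
            fun hnr hopt hnpr => absurd ⟨hopt, hnpr⟩ h2⟩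
    choose wit hwit1 hwit2 hwit3 using hwitex
    set sB : Strat Q B := fun h q => dirac (wit (sA h q) q) with hsB
    have hsafe : ∀ h q, q ≠ T → ∑ x, step δ dist (sA h q) (sB h q) q x * m x ≤ m q := by
      intro h q hq
      show ∑ x, step δ dist (sA h q) (dirac (wit (sA h q) q)) q x * m x ≤ m q
      rw [step_m_outB, outB_optAct (hwit1 (sA h q) q)]
      exact valStrat_le_m δ dist T m hm hq (sA h q)
    -- the invariant along relevant histories
    have hinv : ∀ h q, RelHist δ dist sA sB q0 h q →
        q ≠ T ∧ m q ≤ valA δ dist T (residual sA h) q ∧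
          (m q = 0 ∨ (q ∈ BadN δ dist m T (n+1) ∧ q ∉ Bd)) := by
      intro h q hrel
      induction hrel with
      | base =>
        refine ⟨?_, ?_, Or.inr ⟨hq0, ?_⟩⟩
        · intro hT
          exact T_not_mem_BadN δ dist T m (n+1) (hT ▸ hq0)
        · rw [residual_nil]; exact hval0
        · intro hq0Bd
          exact IH q0 hq0Bd sA hval0
      | @step h' qq q' hrel' hstep ih =>
        obtain ⟨ihT, ihval, ihclass⟩ := ih
        have hval' : m q' ≤ valA δ dist T (residual sA (h' ++ [qq])) q' :=
          resid_opt_step δ dist T m habs hm sA sB ihT (hsafe h' qq ihT) ihval hstep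
        rcases ihclass with h0 | ⟨hBad, hnBd⟩
        · -- zero-value states propagate
          have hsum := hsafe h' qq ihT
          rw [h0] at hsum
          have hnn : ∀ x ∈ Finset.univ, (0:ℝ) ≤ step δ dist (sA h' qq) (sB h' qq) qq x * m x :=
            fun x _ => mul_nonneg (step_nonneg δ dist _ _ _ _) (m_nonneg δ dist T m hm x)
          have hzero : ∑ x, step δ dist (sA h' qq) (sB h' qq) qq x * m x = 0 :=
            le_antisymm hsum (Finset.sum_nonneg hnn)
          have hterm := (Finset.sum_eq_zero_iff_of_nonneg hnn).1 hzero q' (Finset.mem_univ q')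
          have hm' : m q' = 0 := by
            rcases mul_eq_zero.1 hterm with h | h
            · exact absurd h hstep
            · exact h
          have hq'T : q' ≠ T := by
            intro hT
            rw [hT, m_T δ dist T m hm] at hm'
            norm_num at hm'
          exact ⟨hq'T, hval', Or.inl hm'⟩
        · -- Bad states : the witness action avoids Sec and Bd
          have hσopt : sA h' qq ∈ OptA (locPay δ dist m qq) := by
            have hl := locopt_of_residopt δ dist T m habs hm (residual sA h') ihT ihval
            have he : (residual sA h') [] qq = sA h' qq := by
              show sA (h' ++ []) qq = sA h' qq
              rw [List.append_nil]
            rwa [he] at hl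
          have hnRisk : sA h' qq ∉ Risk δ dist m qq Bd := by
            intro hrisk
            obtain ⟨a, ha, hnat⟩ := hwit2 (sA h' qq) qq hrisk
            obtain ⟨q'', hq''Bd, hq''d⟩ := hnat
            have hstep'' : step δ dist (sA h' qq) (sB h' qq) qq q'' ≠ 0 := by
              show step δ dist (sA h' qq) (dirac (wit (sA h' qq) qq)) qq q'' ≠ 0
              exact step_dirac_pos_of δ dist ha hq''d
            have hval'' := resid_opt_step δ dist T m habs hm sA sB ihT
              (hsafe h' qq ihT) ihval hstep''
            exact IH q'' hq''Bd (residual sA (h' ++ [qq])) hval''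
          have hnProg : sA h' qq ∉ Prog δ dist m qq Sn := by
            intro hprog
            have hqSec : qq ∈ SecN δ dist m T Bd (Fintype.card Q + 1) :=
              Or.inr ⟨hnBd, sA h' qq, hprog, hnRisk⟩
            exact hBad (hSnsub _ hqSec)
          obtain ⟨a, ha, hda⟩ : ∃ a, (sA h' qq).1 a ≠ 0 ∧
              (dist (δ qq a (wit (sA h' qq) qq))).1 q' ≠ 0 := by
            apply step_dirac_ne_zero δ dist
            exact hstep
          have hq'Sn : q' ∉ Sn := by
            intro hmem
            exact (hwit3 (sA h' qq) qq hnRisk hσopt hnProg a ha) ⟨q', hmem, hda⟩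
          have hq'Bd : q' ∉ Bd := by
            intro hq'bd
            exact hnRisk ⟨hσopt, wit (sA h' qq) qq, hwit1 (sA h' qq) qq, a, ha,
              ⟨q', hq'bd, hda⟩⟩
          have hq'T : q' ≠ T := by
            intro hT
            apply hq'Sn
            rw [hT, hSn]
            exact T_mem_SecN δ dist T m _
          refine ⟨hq'T, hval', ?_⟩
          by_cases hq'm : m q' = 0
          · exact Or.inl hq'm
          · right
            refine ⟨?_, hq'Bd⟩
            rw [BadN_succ_eq]
            intro hq'Sec
            rcases hq'Sec with hU | h00
            · obtain ⟨s, ⟨k, rfl⟩, hk⟩ := hU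
              apply hq'Sn
              rw [hSn, ← SecN_stable δ dist T m Bd]
              exact Set.mem_iUnion.2 ⟨k, hk⟩
            · exact hq'm h00
    have hz : reach δ dist T sA sB q0 = 0 :=
      reach_zero δ dist T sA sB q0 (fun h q hrel => (hinv h q hrel).1)
    have h1 := valA_le_reach δ dist T sA sB q0
    rw [hz] at h1
    exact hm0 (le_antisymm (le_trans hval0 h1) (m_nonneg δ dist T m hm q0))

lemma not_maximizable_of_bad (habs : Absorbing δ dist T) (hm : IsLfpDelta δ dist T m)
    {q : Q} (hq : q ∈ Bad δ dist m T) : ¬ Maximizable δ dist T q := by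
  rintro ⟨sA, hsA⟩
  apply not_opt_of_BadN δ dist T m habs hm (Fintype.card Q) q hq sA
  rw [value_eq_m δ dist T m habs hm q] at hsA
  exact le_of_eq hsA.symm

end Dev7b
end CRG

/-- `Bad` is the set of sub-maximizable states, `Sec(Bad)` is the set of
maximizable states, and for every ε > 0 there is a positional Player A strategy optimal
from every maximizable state and ε-optimal from every sub-maximizable state. -/
theorem stmt7
    {A B Q D : Type} [Fintype A] [Fintype B] [Fintype Q] [Fintype D]
    [Nonempty A] [Nonempty B] [Nonempty Q] [Nonempty D] [DecidableEq Q]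
    (δ : Q → A → B → D) (dist : D → FDist Q) (T : Q)
    (habs : CRG.Absorbing δ dist T)
    (m : Q → ℝ) (hm : CRG.IsLfpDelta δ dist T m) :
    CRG.Bad δ dist m T = { q : Q | ¬ CRG.Maximizable δ dist T q } ∧
    CRG.Sec δ dist m T (CRG.Bad δ dist m T) = { q : Q | CRG.Maximizable δ dist T q } ∧
    ∀ ε : ℝ, 0 < ε →
      ∃ sA : Q → FDist A,
        (∀ q : Q, CRG.Maximizable δ dist T q →
          CRG.valA δ dist T (CRG.ofPos sA) q = CRG.value δ dist T q) ∧
        (∀ q : Q, ¬ CRG.Maximizable δ dist T q →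
          CRG.value δ dist T q - ε ≤ CRG.valA δ dist T (CRG.ofPos sA) q) := by
  have hbadeq : CRG.Bad δ dist m T = { q : Q | ¬ CRG.Maximizable δ dist T q } := by
    ext q
    constructor
    · intro hq
      exact CRG.not_maximizable_of_bad δ dist T m habs hm hq
    · intro hq
      by_contra hn
      exact hq (CRG.maximizable_of_not_bad δ dist T m habs hm hn)
  refine ⟨hbadeq, ?_, ?_⟩
  · rw [CRG.Bad_stable δ dist T m, hbadeq]
    ext q
    simp
  · intro ε hε
    obtain ⟨σsel, h1, h2⟩ := CRG.exists_good_positional δ dist T m habs hm hε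
    refine ⟨σsel, fun q hq => ?_, fun q hq => ?_⟩
    · have hnb : q ∉ CRG.Bad δ dist m T := by
        rw [hbadeq]
        simp only [Set.mem_setOf_eq, not_not]
        exact hq
      apply le_antisymm (CRG.valA_le_value δ dist T _ q)
      rw [CRG.value_eq_m δ dist T m habs hm q]
      exact h2 q hnb
    · rw [CRG.value_eq_m δ dist T m habs hm q]
      exact h1 q
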